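/- arXiv:2202.08863 — 4 statements merged into one kernel-verified Lean document; each statement's English description precedes it below -/
import Mathlib

section
/- Let d, m ≥ 1 and let c be the least positive integer satisfying (c² − 3c + 2)/2 ≥ m. Let (H₁,…,H_m) and (H₁′,…,H_m′) be tuples of Hermitian d×d complex matrices. If Tr(H_{w(1)} ⋯ H_{w(ℓ)}) = Tr(H′_{w(1)} ⋯ H′_{w(ℓ)}) for every ℓ with 1 ≤ ℓ ≤ ⌈((cd)² + 2)/3⌉ and every function w : {1,…,ℓ} → {1,…,m}, then (H₁,…,H_m) and (H₁′,…,H_m′) are simultaneously unitarily similar. -/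
open Matrix

/-- A word trace: the trace of `H_{w 0} * H_{w 1} * ⋯ * H_{w (ℓ-1)}`. -/
noncomputable def wordTrace {d m : ℕ} (H : Fin m → Matrix (Fin d) (Fin d) ℂ)
    {ℓ : ℕ} (w : Fin ℓ → Fin m) : ℂ :=
  ((List.ofFn fun i => H (w i)).prod).trace

/-- Two tuples of `d × d` matrices are simultaneously unitarily similar if a single
unitary `U` conjugates every member of the first tuple to the corresponding member
of the second. -/
def SimUnitarilySimilar {d m : ℕ} (H H' : Fin m → Matrix (Fin d) (Fin d) ℂ) : Prop :=
  ∃ U ∈ Matrix.unitaryGroup (Fin d) ℂ, ∀ j, H' j = U * H j * Uᴴ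

open Module
open scoped ComplexOrder

namespace SpechtAux

variable {κ : Type*} [Fintype κ] [DecidableEq κ]

/-- A matrix as a linear endomorphism of Euclidean space. -/
noncomputable def em (M : Matrix κ κ ℂ) : EuclideanSpace ℂ κ →ₗ[ℂ] EuclideanSpace ℂ κ :=
  Matrix.toEuclideanLin M

lemma em_inj : Function.Injective (em (κ := κ)) :=
  fun _ _ h => Matrix.toEuclideanLin.injective h

lemma em_mul (A B : Matrix κ κ ℂ) : em (A * B) = (em A) ∘ₗ (em B) := by
  apply LinearMap.ext
  intro v
  simp [em, Matrix.toEuclideanLin_apply, Matrix.mulVec_mulVec]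

lemma em_mul_apply (A B : Matrix κ κ ℂ) (v : EuclideanSpace ℂ κ) :
    em (A * B) v = em A (em B v) := by rw [em_mul]; rfl

lemma em_one : em (1 : Matrix κ κ ℂ) = LinearMap.id := by
  apply LinearMap.ext
  intro v
  simp [em, Matrix.toEuclideanLin_apply]

lemma em_zero : em (0 : Matrix κ κ ℂ) = 0 := map_zero _

lemma em_conjT (A : Matrix κ κ ℂ) : em Aᴴ = LinearMap.adjoint (em A) :=
  Matrix.toEuclideanLin_conjTranspose_eq_adjoint A

/-- The matrix of the orthogonal projection onto a subspace. -/
noncomputable def pm (S : Submodule ℂ (EuclideanSpace ℂ κ)) : Matrix κ κ ℂ :=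
  Matrix.toEuclideanLin.symm (S.subtype ∘ₗ (S.orthogonalProjectionOnto).toLinearMap)

lemma em_pm (S : Submodule ℂ (EuclideanSpace ℂ κ)) :
    em (pm S) = S.subtype ∘ₗ (S.orthogonalProjectionOnto).toLinearMap := by
  simp [em, pm]

lemma em_pm_apply (S : Submodule ℂ (EuclideanSpace ℂ κ)) (v : EuclideanSpace ℂ κ) :
    em (pm S) v = (S.orthogonalProjectionOnto v : EuclideanSpace ℂ κ) := by
  rw [em_pm]; rfl

lemma pm_mem (S : Submodule ℂ (EuclideanSpace ℂ κ)) (v : EuclideanSpace ℂ κ) :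
    em (pm S) v ∈ S := by
  rw [em_pm_apply]; exact (S.orthogonalProjectionOnto v).2

lemma pm_fix (S : Submodule ℂ (EuclideanSpace ℂ κ)) {v : EuclideanSpace ℂ κ} (hv : v ∈ S) :
    em (pm S) v = v := by
  rw [em_pm_apply, ← Submodule.starProjection_apply, Submodule.starProjection_eq_self_iff]; exact hv

lemma pm_orth (S : Submodule ℂ (EuclideanSpace ℂ κ)) {v : EuclideanSpace ℂ κ} (hv : v ∈ Sᗮ) :
    em (pm S) v = 0 := by
  rw [em_pm_apply, Submodule.orthogonalProjectionOnto_apply_of_mem_orthogonal hv]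
  rfl

lemma pm_conjT (S : Submodule ℂ (EuclideanSpace ℂ κ)) : (pm S)ᴴ = pm S := by
  apply em_inj
  rw [em_conjT, em_pm]
  exact LinearMap.isSelfAdjoint_iff'.mp
    ((LinearMap.isSymmetric_iff_isSelfAdjoint _).mp (S.starProjection_isSymmetric))

lemma pm_commutes (S : Submodule ℂ (EuclideanSpace ℂ κ)) (M : Matrix κ κ ℂ)
    (h1 : ∀ v ∈ S, em M v ∈ S) (h2 : ∀ v ∈ S, em Mᴴ v ∈ S) :
    M * pm S = pm S * M := by
  apply em_inj
  rw [em_mul, em_mul]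
  apply LinearMap.ext
  intro v
  have hdec : v = em (pm S) v + (v - em (pm S) v) := by abel
  have hmem : v - em (pm S) v ∈ Sᗮ := by
    rw [em_pm_apply]
    exact Submodule.sub_starProjection_mem_orthogonal v
  have horth : em M (v - em (pm S) v) ∈ Sᗮ := by
    rw [Submodule.mem_orthogonal]
    intro u hu
    have h3 : inner ℂ u (em M (v - em (pm S) v)) =
        (inner ℂ (em Mᴴ u) (v - em (pm S) v) : ℂ) := by
      rw [em_conjT]
      exact (LinearMap.adjoint_inner_left (em M) (v - em (pm S) v) u).symm
    rw [h3]
    exact Submodule.inner_right_of_mem_orthogonal (h2 u hu) hmem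
  calc (em M ∘ₗ em (pm S)) v = em M (em (pm S) v) := rfl
    _ = em (pm S) (em M (em (pm S) v)) + em (pm S) (em M (v - em (pm S) v)) := by
        rw [pm_fix S (h1 _ (pm_mem S v)), pm_orth S horth, add_zero]
    _ = em (pm S) (em M v) := by
        rw [← map_add, ← map_add, ← hdec]
    _ = (em (pm S) ∘ₗ em M) v := rfl


/-! ### Double commutant theorem -/

/-- Amplification `M ⊗ₖ 1`. -/
noncomputable def amp (M : Matrix κ κ ℂ) : Matrix (κ × κ) (κ × κ) ℂ :=
  Matrix.kroneckerMap (· * ·) M (1 : Matrix κ κ ℂ)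

lemma amp_mul (A B : Matrix κ κ ℂ) : amp (A * B) = amp A * amp B := by
  unfold amp
  rw [← Matrix.mul_kronecker_mul, Matrix.one_mul]

lemma amp_conjT (A : Matrix κ κ ℂ) : (amp A)ᴴ = amp Aᴴ := by
  ext ⟨i, k⟩ ⟨j, l⟩
  simp only [amp, Matrix.conjTranspose_apply, Matrix.kroneckerMap_apply, Matrix.one_apply,
    star_mul', eq_comm]
  rcases eq_or_ne k l with h | h <;> simp [h]

/-- vectorization of a matrix -/
noncomputable def vecE : Matrix κ κ ℂ ≃ₗ[ℂ] EuclideanSpace ℂ (κ × κ) where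
  toFun M := (WithLp.equiv 2 _).symm (fun p : κ × κ => M p.1 p.2)
  invFun v := Matrix.of fun i j => (WithLp.equiv 2 _) v (i, j)
  map_add' _ _ := rfl
  map_smul' _ _ := rfl
  left_inv _ := rfl
  right_inv _ := rfl

lemma em_amp_vecE (b x : Matrix κ κ ℂ) : em (amp b) (vecE x) = vecE (b * x) := by
  apply (WithLp.equiv 2 _).injective
  funext ⟨i, k⟩
  show (amp b *ᵥ fun p : κ × κ => x p.1 p.2) (i, k) = (b * x) i k
  simp only [Matrix.mulVec, dotProduct, amp, Matrix.kroneckerMap_apply,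
    Matrix.one_apply, Fintype.sum_prod_type, Matrix.mul_apply]
  refine Finset.sum_congr rfl fun j _ => ?_
  simp [Finset.sum_ite_eq' Finset.univ k, mul_ite, mul_assoc]

/-- a block slice of an amplified-size matrix -/
noncomputable def slice (X : Matrix (κ × κ) (κ × κ) ℂ) (k l : κ) : Matrix κ κ ℂ :=
  Matrix.of fun i j => X (i, k) (j, l)

lemma amp_mul_eq_slice (b : Matrix κ κ ℂ) (X : Matrix (κ × κ) (κ × κ) ℂ) (i k j l : κ) :
    (amp b * X) (i, k) (j, l) = (b * slice X k l) i j := by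
  simp only [Matrix.mul_apply, amp, Matrix.kroneckerMap_apply, Matrix.one_apply, slice,
    Fintype.sum_prod_type, Matrix.of_apply, mul_ite, mul_one, mul_zero, ite_mul, zero_mul]
  refine Finset.sum_congr rfl fun r _ => ?_
  exact (Finset.sum_ite_eq Finset.univ k fun s => b i r * X (r, s) (j, l)).trans
    (if_pos (Finset.mem_univ k))

lemma mul_amp_eq_slice (b : Matrix κ κ ℂ) (X : Matrix (κ × κ) (κ × κ) ℂ) (i k j l : κ) :
    (X * amp b) (i, k) (j, l) = (slice X k l * b) i j := by
  simp only [Matrix.mul_apply, amp, Matrix.kroneckerMap_apply, Matrix.one_apply, slice,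
    Fintype.sum_prod_type, Matrix.of_apply, mul_ite, mul_one, mul_zero, ite_mul, zero_mul]
  refine Finset.sum_congr rfl fun r _ => ?_
  exact (Finset.sum_ite_eq' Finset.univ l fun s => X (i, k) (r, s) * b r j).trans
    (if_pos (Finset.mem_univ l))

/-- **Finite-dimensional double commutant theorem** -/
theorem double_commutant (B : Subalgebra ℂ (Matrix κ κ ℂ)) (hB : ∀ b ∈ B, bᴴ ∈ B)
    (T : Matrix κ κ ℂ) (hT : ∀ X ∈ Subalgebra.centralizer ℂ (B : Set (Matrix κ κ ℂ)),
      T * X = X * T) : T ∈ B := by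
  set S : Submodule ℂ (EuclideanSpace ℂ (κ × κ)) :=
    (Subalgebra.toSubmodule B).map (vecE.toLinearMap) with hS
  have hmemS : ∀ y, y ∈ S ↔ ∃ x ∈ B, vecE x = y := by
    intro y
    rw [hS, Submodule.mem_map]
    constructor
    · rintro ⟨x, hx, rfl⟩; exact ⟨x, hx, rfl⟩
    · rintro ⟨x, hx, rfl⟩; exact ⟨x, hx, rfl⟩
  set R := pm S with hR
  -- R commutes with amp b for all b ∈ B
  have hRb : ∀ b ∈ B, amp b * R = R * amp b := by
    intro b hb
    apply pm_commutes
    · intro v hv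
      obtain ⟨x, hx, rfl⟩ := (hmemS v).mp hv
      rw [em_amp_vecE]
      exact (hmemS _).mpr ⟨b * x, B.mul_mem hb hx, rfl⟩
    · intro v hv
      obtain ⟨x, hx, rfl⟩ := (hmemS v).mp hv
      rw [amp_conjT, em_amp_vecE]
      exact (hmemS _).mpr ⟨bᴴ * x, B.mul_mem (hB b hb) hx, rfl⟩
  -- hence every slice of R is in the centralizer, so T * slices commute, so amp T commutes with R
  have hTR : amp T * R = R * amp T := by
    have hslice : ∀ k l, slice R k l ∈ Subalgebra.centralizer ℂ (B : Set (Matrix κ κ ℂ)) := by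
      intro k l
      rw [Subalgebra.mem_centralizer_iff]
      intro b hb
      have := hRb b hb
      ext i j
      have h1 := amp_mul_eq_slice b R i k j l
      have h2 := mul_amp_eq_slice b R i k j l
      rw [this] at h1
      rw [h2] at h1
      exact h1.symm
    ext ⟨i, k⟩ ⟨j, l⟩
    rw [amp_mul_eq_slice, mul_amp_eq_slice, hT _ (hslice k l)]
  -- conclude
  have h1 : vecE (1 : Matrix κ κ ℂ) ∈ S := (hmemS _).mpr ⟨1, B.one_mem, rfl⟩
  have hfix : em R (vecE 1) = vecE 1 := pm_fix S h1
  have : vecE T = em R (em (amp T) (vecE 1)) := by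
    rw [← em_mul_apply, ← hTR, em_mul_apply, hfix, em_amp_vecE, mul_one]
  obtain ⟨x, hx, hxe⟩ := (hmemS _).mp (pm_mem S (em (amp T) (vecE 1)))
  have hxT : x = T := vecE.injective (hxe.trans this.symm)
  rwa [hxT] at hx



/-! ### trace and rank helpers -/

lemma trace_conjT_mul_self_eq_zero (A : Matrix κ κ ℂ) :
    (Aᴴ * A).trace = 0 ↔ A = 0 := by
  have h : (Aᴴ * A).trace = ((∑ j, ∑ i, Complex.normSq (A i j) : ℝ) : ℂ) := by
    rw [Matrix.trace]
    push_cast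
    refine Finset.sum_congr rfl fun j _ => ?_
    rw [Matrix.diag_apply, Matrix.mul_apply]
    refine Finset.sum_congr rfl fun i _ => ?_
    rw [Matrix.conjTranspose_apply, Complex.star_def, ← Complex.normSq_eq_conj_mul_self]
  rw [h]
  constructor
  · intro h0
    have h1 : (∑ j, ∑ i, Complex.normSq (A i j)) = 0 := by exact_mod_cast h0
    have hterm := (Finset.sum_eq_zero_iff_of_nonneg
      (fun j _ => Finset.sum_nonneg fun i _ => Complex.normSq_nonneg _)).mp h1
    ext i j
    have h2 := (Finset.sum_eq_zero_iff_of_nonneg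
      (fun i _ => Complex.normSq_nonneg _)).mp (hterm j (Finset.mem_univ j)) i (Finset.mem_univ i)
    simpa using Complex.normSq_eq_zero.mp h2
  · intro h0
    rw [h0]
    simp

lemma trace_ne_zero_of_herm_idem {P : Matrix κ κ ℂ} (hH : Pᴴ = P) (hI : P * P = P)
    (hne : P ≠ 0) : P.trace ≠ 0 := by
  intro h
  apply hne
  apply (trace_conjT_mul_self_eq_zero P).mp
  rw [hH, hI]
  exact h

/-- rank of a matrix, as the dimension of its range. -/
noncomputable def rk (M : Matrix κ κ ℂ) : ℕ := finrank ℂ (LinearMap.range (em M))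

lemma rk_eq_zero_iff {M : Matrix κ κ ℂ} : rk M = 0 ↔ M = 0 := by
  rw [rk, Submodule.finrank_eq_zero, LinearMap.range_eq_bot]
  constructor
  · intro h; apply em_inj; rw [h, em_zero]
  · intro h; rw [h, em_zero]

lemma em_add (A B : Matrix κ κ ℂ) : em (A + B) = em A + em B := map_add _ A B

lemma rk_add {e f : Matrix κ κ ℂ} (he : e * e = e) (hf : f * f = f)
    (hef : e * f = 0) (hfe : f * e = 0) : rk (e + f) = rk e + rk f := by
  have hsup : LinearMap.range (em (e + f)) = LinearMap.range (em e) ⊔ LinearMap.range (em f) := by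
    apply le_antisymm
    · rintro y ⟨v, rfl⟩
      rw [em_add, LinearMap.add_apply]
      exact Submodule.add_mem_sup ⟨v, rfl⟩ ⟨v, rfl⟩
    · rw [sup_le_iff]
      constructor
      · rintro y ⟨v, rfl⟩
        refine ⟨em e v, ?_⟩
        rw [← em_mul_apply]
        congr 1
        rw [Matrix.add_mul, he, hfe, add_zero]
      · rintro y ⟨v, rfl⟩
        refine ⟨em f v, ?_⟩
        rw [← em_mul_apply]
        congr 1
        rw [Matrix.add_mul, hf, hef, zero_add]
  have hdisj : LinearMap.range (em e) ⊓ LinearMap.range (em f) = ⊥ := by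
    rw [eq_bot_iff]
    rintro x hx
    obtain ⟨⟨a, ha⟩, ⟨b, hb⟩⟩ := hx
    have h1 : em e x = x := by rw [← ha, ← em_mul_apply, he]
    have h2 : em e x = 0 := by rw [← hb, ← em_mul_apply, hef, em_zero]; rfl
    rw [Submodule.mem_bot, ← h1, h2]
  have hfin := Submodule.finrank_sup_add_finrank_inf_eq
    (LinearMap.range (em e)) (LinearMap.range (em f))
  rw [hdisj, finrank_bot, add_zero] at hfin
  rw [rk, hsup, hfin]
  rfl

/-! ### the commutant is star-closed -/

lemma centralizer_star_closed (B : Subalgebra ℂ (Matrix κ κ ℂ)) (hB : ∀ b ∈ B, bᴴ ∈ B) :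
    ∀ M ∈ Subalgebra.centralizer ℂ (B : Set (Matrix κ κ ℂ)),
      Mᴴ ∈ Subalgebra.centralizer ℂ (B : Set (Matrix κ κ ℂ)) := by
  intro M hM
  rw [Subalgebra.mem_centralizer_iff] at hM ⊢
  intro g hg
  have h := hM gᴴ (hB g hg)
  calc g * Mᴴ = (M * gᴴ)ᴴ := by
        rw [Matrix.conjTranspose_mul, Matrix.conjTranspose_conjTranspose]
    _ = (gᴴ * M)ᴴ := by rw [h]
    _ = Mᴴ * g := by rw [Matrix.conjTranspose_mul, Matrix.conjTranspose_conjTranspose]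

/-! ### existence of a nonzero corner element of the commutant -/

lemma exists_corner (B : Subalgebra ℂ (Matrix κ κ ℂ)) (hB : ∀ b ∈ B, bᴴ ∈ B)
    (P Q : Matrix κ κ ℂ) (hPH : Pᴴ = P) (hPP : P * P = P)
    (htr : ∀ b ∈ B, (P * b).trace = (Q * b).trace) (hPne : P ≠ 0) :
    ∃ c ∈ Subalgebra.centralizer ℂ (B : Set (Matrix κ κ ℂ)), Q * c * P ≠ 0 := by
  by_contra hcon
  push_neg at hcon
  set C := Subalgebra.centralizer ℂ (B : Set (Matrix κ κ ℂ)) with hCdef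
  set W : Submodule ℂ (EuclideanSpace ℂ κ) :=
    Submodule.span ℂ {y | ∃ c ∈ C, ∃ v, y = em (c * P) v} with hWdef
  have hgen : ∀ c ∈ C, ∀ v, em (c * P) v ∈ W :=
    fun c hc v => Submodule.subset_span ⟨c, hc, v, rfl⟩
  have hmap : ∀ M ∈ C, ∀ y ∈ W, em M y ∈ W := by
    intro M hM y hy
    induction hy using Submodule.span_induction with
    | mem y hy =>
        obtain ⟨c, hc, v, rfl⟩ := hy
        rw [← em_mul_apply, ← Matrix.mul_assoc]
        exact hgen (M * c) (C.mul_mem hM hc) v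
    | zero => rw [map_zero]; exact W.zero_mem
    | add a b ha hb iha ihb => rw [map_add]; exact W.add_mem iha ihb
    | smul r a ha iha => rw [_root_.map_smul]; exact W.smul_mem r iha
  have hcomm : ∀ M ∈ C, M * pm W = pm W * M := fun M hM =>
    pm_commutes W M (hmap M hM) (hmap Mᴴ (centralizer_star_closed B hB M hM))
  have hRB : pm W ∈ B := double_commutant B hB (pm W) (fun X hX => (hcomm X hX).symm)
  have hRP : pm W * P = P := by
    apply em_inj
    rw [em_mul]
    apply LinearMap.ext
    intro v
    have h1 : em P v ∈ W := by
      have := hgen 1 C.one_mem v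
      rwa [Matrix.one_mul] at this
    exact pm_fix W h1
  have hQR : Q * pm W = 0 := by
    have hQW : ∀ y ∈ W, em Q y = 0 := by
      intro y hy
      induction hy using Submodule.span_induction with
      | mem y hy =>
          obtain ⟨c, hc, v, rfl⟩ := hy
          rw [← em_mul_apply, ← Matrix.mul_assoc, hcon c hc, em_zero]
          rfl
      | zero => rw [map_zero]
      | add a b ha hb iha ihb => rw [map_add, iha, ihb, add_zero]
      | smul r a ha iha => rw [_root_.map_smul, iha, smul_zero]
    apply em_inj
    rw [em_mul, em_zero]
    apply LinearMap.ext
    intro v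
    exact hQW _ (pm_mem W v)
  have h1 := htr (pm W) hRB
  rw [hQR, Matrix.trace_zero, Matrix.trace_mul_comm, hRP] at h1
  exact trace_ne_zero_of_herm_idem hPH hPP hPne h1



/-! ### conjugation by a unitary, as an algebra homomorphism -/

noncomputable def conjAlgHom (V : Matrix κ κ ℂ) (hV : V ∈ Matrix.unitaryGroup κ ℂ) :
    Matrix κ κ ℂ →ₐ[ℂ] Matrix κ κ ℂ where
  toFun X := V * X * star V
  map_one' := by
    show V * 1 * star V = 1
    rw [Matrix.mul_one]
    exact Matrix.mem_unitaryGroup_iff.mp hV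
  map_mul' X Y := by
    show V * (X * Y) * star V = (V * X * star V) * (V * Y * star V)
    have h : star V * V = 1 := Matrix.mem_unitaryGroup_iff'.mp hV
    simp only [Matrix.mul_assoc]
    rw [← Matrix.mul_assoc (star V) V (Y * star V), h, Matrix.one_mul]
  map_zero' := by
    show V * 0 * star V = 0
    simp
  map_add' X Y := by
    show V * (X + Y) * star V = V * X * star V + V * Y * star V
    rw [mul_add, add_mul]
  commutes' r := by
    show V * algebraMap ℂ (Matrix κ κ ℂ) r * star V = algebraMap ℂ (Matrix κ κ ℂ) r
    simp only [Algebra.algebraMap_eq_smul_one]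
    rw [Matrix.mul_smul, Matrix.mul_one, Matrix.smul_mul]
    congr 1
    exact Matrix.mem_unitaryGroup_iff.mp hV

lemma aeval_diagonal (dv : κ → ℂ) (q : Polynomial ℂ) :
    Polynomial.aeval (Matrix.diagonal dv) q = Matrix.diagonal (fun i => q.eval (dv i)) := by
  have h1 : Matrix.diagonal dv = Matrix.diagonalAlgHom ℂ dv := rfl
  rw [h1, Polynomial.aeval_algHom_apply]
  have h2 : ∀ i, (Polynomial.aeval dv q) i = q.eval (dv i) := by
    intro i
    have h := (Polynomial.aeval_algHom_apply (Pi.evalAlgHom ℂ (fun _ : κ => ℂ) i) dv q).symm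
    calc (Polynomial.aeval dv q) i = Polynomial.aeval (dv i) q := h
      _ = q.eval (dv i) := congrFun (Polynomial.coe_aeval_eq_eval (dv i)) q
  have h3 : Polynomial.aeval dv q = fun i => q.eval (dv i) := funext h2
  rw [h3]
  rfl

/-! ### the spectral step -/

lemma spectral_piece (C : Subalgebra ℂ (Matrix κ κ ℂ)) (hC : ∀ M ∈ C, Mᴴ ∈ C)
    {P Q T : Matrix κ κ ℂ}
    (hPH : Pᴴ = P) (hPP : P * P = P) (hQQ : Q * Q = Q)
    (hTC : T ∈ C) (hTne : T ≠ 0) (hQTP : Q * T * P = T) :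
    ∃ u p : Matrix κ κ ℂ, u ∈ C ∧ p ∈ C ∧ p ≠ 0 ∧ uᴴ * u = p ∧ pᴴ = p ∧ p * p = p ∧
      P * p = p ∧ p * P = p ∧ u * p = u ∧ Q * u = u ∧ u * P = u := by
  have hTP : T * P = T := by
    conv_lhs => rw [← hQTP]
    rw [Matrix.mul_assoc, Matrix.mul_assoc, hPP, ← Matrix.mul_assoc]
    exact hQTP
  have hQT : Q * T = T := by
    conv_lhs => rw [← hQTP]
    rw [← Matrix.mul_assoc, ← Matrix.mul_assoc, hQQ]
    exact hQTP
  set S := Tᴴ * T with hSdef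
  have hSne : S ≠ 0 := by rwa [hSdef, Ne, Matrix.conjTranspose_mul_self_eq_zero]
  have hSC : S ∈ C := C.mul_mem (hC T hTC) hTC
  have psd := Matrix.posSemidef_conjTranspose_mul_self T
  have hS : S.IsHermitian := psd.1
  have hSP : S * P = S := by rw [hSdef, Matrix.mul_assoc, hTP]
  have hPS : P * S = S := by
    have : P * Tᴴ = Tᴴ := by
      rw [← hPH, ← Matrix.conjTranspose_mul, hTP]
    rw [hSdef, ← Matrix.mul_assoc, this]
  haveI : Nonempty κ := by
    by_contra h
    rw [not_nonempty_iff] at h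
    apply hTne
    ext i j
    exact (h.false i).elim
  obtain ⟨i₀, -, hmax⟩ := Finset.exists_max_image Finset.univ hS.eigenvalues Finset.univ_nonempty
  set μ := hS.eigenvalues i₀ with hμdef
  have hμpos : 0 < μ := by
    rcases lt_or_ge 0 μ with h | h
    · exact h
    · exfalso
      apply hSne
      have hall : ∀ i, hS.eigenvalues i = 0 := fun i =>
        le_antisymm ((hmax i (Finset.mem_univ i)).trans h) (psd.eigenvalues_nonneg i)
      have hdz : (Matrix.diagonal (RCLike.ofReal ∘ hS.eigenvalues) : Matrix κ κ ℂ) = 0 := by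
        ext i j
        by_cases h' : i = j <;> simp [Matrix.diagonal, h', hall]
      rw [hS.spectral_theorem, hdz, map_zero]
  set V := (hS.eigenvectorUnitary : Matrix κ κ ℂ) with hVdef
  have hVmem : V ∈ Matrix.unitaryGroup κ ℂ := hS.eigenvectorUnitary.2
  have hVV : V * star V = 1 := Matrix.mem_unitaryGroup_iff.mp hVmem
  have hVV' : star V * V = 1 := Matrix.mem_unitaryGroup_iff'.mp hVmem
  set dv : κ → ℂ := fun i => ((hS.eigenvalues i : ℝ) : ℂ) with hdvdef
  have hspec : S = V * Matrix.diagonal dv * star V := hS.spectral_theorem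
  -- the Lagrange polynomial
  set nodes : Finset ℂ := insert 0 (Finset.univ.image fun i => dv i) with hnodes
  have hμnode : ((μ : ℝ) : ℂ) ∈ nodes := by
    rw [hnodes]
    exact Finset.mem_insert_of_mem (Finset.mem_image.mpr ⟨i₀, Finset.mem_univ i₀, rfl⟩)
  have hμne0 : ((μ : ℝ) : ℂ) ≠ 0 := by
    simp only [Ne, Complex.ofReal_eq_zero]
    exact ne_of_gt hμpos
  set q : Polynomial ℂ := Lagrange.basis nodes id ((μ : ℝ) : ℂ) with hq
  have heval_self : q.eval ((μ : ℝ) : ℂ) = 1 := by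
    rw [hq]
    simpa using Lagrange.eval_basis_self (v := id) (Set.injOn_id _) hμnode
  have heval_zero : q.eval 0 = 0 := by
    rw [hq]
    have h0 : (0 : ℂ) ∈ nodes := Finset.mem_insert_self 0 _
    simpa using Lagrange.eval_basis_of_ne (v := id) hμne0 h0
  have heval_other : ∀ i, hS.eigenvalues i ≠ μ → q.eval (dv i) = 0 := by
    intro i hi
    rw [hq]
    have hmem : dv i ∈ nodes := by
      rw [hnodes]
      exact Finset.mem_insert_of_mem (Finset.mem_image.mpr ⟨i, Finset.mem_univ i, rfl⟩)
    have hne : ((μ : ℝ) : ℂ) ≠ dv i := by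
      simp only [hdvdef, Ne, Complex.ofReal_inj]
      exact fun h => hi (h.symm)
    simpa using Lagrange.eval_basis_of_ne (v := id) hne hmem
  -- the spectral projection
  set Dp : κ → ℂ := fun i => if hS.eigenvalues i = μ then 1 else 0 with hDp
  set p := Polynomial.aeval S q with hpdef
  have hpform : p = V * Matrix.diagonal Dp * star V := by
    rw [hpdef, hspec]
    have h1 : V * Matrix.diagonal dv * star V = conjAlgHom V hVmem (Matrix.diagonal dv) := rfl
    rw [h1, Polynomial.aeval_algHom_apply, aeval_diagonal]
    have h2 : (fun i => q.eval (dv i)) = Dp := by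
      funext i
      simp only [hDp]
      by_cases h : hS.eigenvalues i = μ
      · rw [if_pos h]
        have hdvi : dv i = ((μ : ℝ) : ℂ) := Complex.ofReal_inj.mpr h
        rw [hdvi, heval_self]
      · rw [if_neg h]
        exact heval_other i h
    rw [h2]
    rfl
  have hpC : p ∈ C := by
    have h := Polynomial.aeval_mem_adjoin_singleton ℂ S (p := q)
    have hle : Algebra.adjoin ℂ {S} ≤ C := Algebra.adjoin_le (Set.singleton_subset_iff.mpr hSC)
    exact hle h
  have hpne : p ≠ 0 := by
    intro h
    have hD : Matrix.diagonal Dp = star V * p * V := by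
      rw [hpform]
      calc Matrix.diagonal Dp
          = (star V * V) * Matrix.diagonal Dp * (star V * V) := by
            rw [hVV', Matrix.one_mul, Matrix.mul_one]
        _ = star V * (V * Matrix.diagonal Dp * star V) * V := by
            simp only [Matrix.mul_assoc]
    rw [h, Matrix.mul_zero, Matrix.zero_mul] at hD
    have h0 : Dp i₀ = 0 := by
      have := congrFun (congrFun hD i₀) i₀
      simpa [Matrix.diagonal] using this
    simp only [hDp, ← hμdef, eq_self_iff_true, if_true] at h0
    exact one_ne_zero h0
  have hstarDp : star Dp = Dp := by
    funext i
    simp only [Pi.star_apply, hDp]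
    by_cases h : hS.eigenvalues i = μ
    · rw [if_pos h]; exact star_one ℂ
    · rw [if_neg h]; exact star_zero ℂ
  have hpH : pᴴ = p := by
    rw [hpform, Matrix.star_eq_conjTranspose V, Matrix.conjTranspose_mul,
      Matrix.conjTranspose_mul, Matrix.conjTranspose_conjTranspose,
      Matrix.diagonal_conjTranspose, hstarDp, ← Matrix.mul_assoc]
  have hDpDp : Matrix.diagonal Dp * Matrix.diagonal Dp = Matrix.diagonal Dp := by
    rw [Matrix.diagonal_mul_diagonal]
    have hdd2 : (fun i => Dp i * Dp i) = Dp := by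
      funext i
      simp only [hDp]
      by_cases h : hS.eigenvalues i = μ
      · simp [h]
      · simp [h]
    rw [hdd2]
  have hpp : p * p = p := by
    rw [hpform]
    simp only [Matrix.mul_assoc]
    rw [← Matrix.mul_assoc (star V) V, hVV', Matrix.one_mul]
    rw [← Matrix.mul_assoc (Matrix.diagonal Dp) (Matrix.diagonal Dp), hDpDp]
  -- p ≤ P via q(0) = 0
  obtain ⟨q₂, hq₂⟩ : (Polynomial.X : Polynomial ℂ) ∣ q := by
    rw [Polynomial.X_dvd_iff, Polynomial.coeff_zero_eq_eval_zero]
    exact heval_zero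
  have hpSr : p = S * Polynomial.aeval S q₂ := by
    rw [hpdef, hq₂, _root_.map_mul, Polynomial.aeval_X]
  have hprS : p = Polynomial.aeval S q₂ * S := by
    rw [hpdef, hq₂, mul_comm Polynomial.X q₂, _root_.map_mul, Polynomial.aeval_X]
  have hPp : P * p = p := by rw [hpSr, ← Matrix.mul_assoc, hPS]
  have hpP : p * P = p := by rw [hprS, Matrix.mul_assoc, hSP]
  -- S * p = μ • p
  have hSp : S * p = ((μ : ℝ) : ℂ) • p := by
    rw [hspec, hpform]
    simp only [Matrix.mul_assoc]
    rw [← Matrix.mul_assoc (star V) V, hVV', Matrix.one_mul]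
    rw [← Matrix.mul_assoc (Matrix.diagonal dv) (Matrix.diagonal Dp), Matrix.diagonal_mul_diagonal]
    have hdd : (fun i => dv i * Dp i) = ((μ : ℝ) : ℂ) • Dp := by
      funext i
      simp only [Pi.smul_apply, hDp, hdvdef, smul_eq_mul]
      by_cases h : hS.eigenvalues i = μ
      · simp only [if_pos h, h]
      · simp only [if_neg h, mul_zero]

    rw [hdd, Matrix.diagonal_smul]
    simp only [Matrix.smul_mul, Matrix.mul_smul]
  -- the partial isometry
  set σ : ℂ := (((Real.sqrt μ)⁻¹ : ℝ) : ℂ) with hσ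
  set u := σ • (T * p) with hu
  have huC : u ∈ C := Subalgebra.smul_mem C (C.mul_mem hTC hpC) σ
  have huu : uᴴ * u = p := by
    rw [hu, Matrix.conjTranspose_smul, Matrix.conjTranspose_mul, hpH]
    rw [Matrix.smul_mul, Matrix.mul_smul, smul_smul]
    have hform : p * Tᴴ * (T * p) = ((μ : ℝ) : ℂ) • p := by
      calc p * Tᴴ * (T * p) = p * (S * p) := by
            rw [hSdef]
            simp only [Matrix.mul_assoc]
        _ = p * (((μ : ℝ) : ℂ) • p) := by rw [hSp]
        _ = ((μ : ℝ) : ℂ) • (p * p) := by rw [Matrix.mul_smul]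
        _ = ((μ : ℝ) : ℂ) • p := by rw [hpp]
    rw [hform, smul_smul]
    have hsc : star σ * σ * ((μ : ℝ) : ℂ) = 1 := by
      rw [hσ, Complex.star_def, Complex.conj_ofReal, ← Complex.ofReal_mul,
        ← Complex.ofReal_mul]
      norm_cast
      rw [← mul_inv, Real.mul_self_sqrt hμpos.le]
      exact inv_mul_cancel₀ (ne_of_gt hμpos)
    rw [hsc, one_smul]
  have hup : u * p = u := by
    rw [hu, Matrix.smul_mul, Matrix.mul_assoc, hpp]
  have hQu : Q * u = u := by
    rw [hu, Matrix.mul_smul, ← Matrix.mul_assoc, hQT]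
  have huP : u * P = u := by
    rw [hu, Matrix.smul_mul, Matrix.mul_assoc, hpP]
  exact ⟨u, p, huC, hpC, hpne, huu, hpH, hpp, hPp, hpP, hup, hQu, huP⟩



/-! ### absorption helpers -/

lemma absorb_left {a e : Matrix κ κ ℂ} (he : eᴴ = e) (hee : e * e = e) (h : a * aᴴ = e) :
    e * a = a := by
  have expand : (a - e * a) * (a - e * a)ᴴ
      = a * aᴴ - a * (aᴴ * e) - e * (a * aᴴ) + e * (a * (aᴴ * e)) := by
    rw [Matrix.conjTranspose_sub, Matrix.conjTranspose_mul, he]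
    simp only [Matrix.sub_mul, Matrix.mul_sub, Matrix.mul_assoc]
    abel
  have h1 : a * (aᴴ * e) = e := by rw [← Matrix.mul_assoc, h, hee]
  have hz : (a - e * a) * (a - e * a)ᴴ = 0 := by
    rw [expand, h, h1]
    simp only [hee]
    abel
  exact (sub_eq_zero.mp (Matrix.self_mul_conjTranspose_eq_zero.mp hz)).symm

lemma absorb_right {a e : Matrix κ κ ℂ} (he : eᴴ = e) (hee : e * e = e) (h : aᴴ * a = e) :
    a * e = a := by
  have h' : aᴴ * aᴴᴴ = e := by rwa [Matrix.conjTranspose_conjTranspose]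
  have h2 := absorb_left he hee h'
  have h3 := congrArg Matrix.conjTranspose h2
  rwa [Matrix.conjTranspose_mul, he, Matrix.conjTranspose_conjTranspose] at h3

/-! ### main induction: equivalence of projections in the commutant -/

theorem proj_equiv (B : Subalgebra ℂ (Matrix κ κ ℂ)) (hB : ∀ b ∈ B, bᴴ ∈ B) :
    ∀ n : ℕ, ∀ P Q : Matrix κ κ ℂ, rk P = n →
      P ∈ Subalgebra.centralizer ℂ (B : Set (Matrix κ κ ℂ)) →
      Q ∈ Subalgebra.centralizer ℂ (B : Set (Matrix κ κ ℂ)) →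
      Pᴴ = P → P * P = P → Qᴴ = Q → Q * Q = Q →
      (∀ b ∈ B, (P * b).trace = (Q * b).trace) →
      ∃ W ∈ Subalgebra.centralizer ℂ (B : Set (Matrix κ κ ℂ)), Wᴴ * W = P ∧ W * Wᴴ = Q := by
  intro n
  induction n using Nat.strong_induction_on with
  | _ n IH =>
  intro P Q hrk hPC hQC hPH hPP hQH hQQ htr
  set C := Subalgebra.centralizer ℂ (B : Set (Matrix κ κ ℂ)) with hCdef
  have hCstar : ∀ M ∈ C, Mᴴ ∈ C := centralizer_star_closed B hB
  rcases eq_or_ne P 0 with hP0 | hPne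
  · -- base case : P = 0, hence Q = 0
    have h1 := htr 1 B.one_mem
    rw [hP0, Matrix.zero_mul, Matrix.mul_one, Matrix.trace_zero] at h1
    have hQ0 : Q = 0 := by
      apply (trace_conjT_mul_self_eq_zero Q).mp
      rw [hQH, hQQ, ← h1]
    refine ⟨0, C.zero_mem, ?_, ?_⟩
    · rw [Matrix.conjTranspose_zero, Matrix.mul_zero, hP0]
    · rw [Matrix.conjTranspose_zero, Matrix.mul_zero, hQ0]
  · -- inductive step
    obtain ⟨c, hcC, hcne⟩ := exists_corner B hB P Q hPH hPP htr hPne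
    have hTC : Q * c * P ∈ C := C.mul_mem (C.mul_mem hQC hcC) hPC
    have hQTP : Q * (Q * c * P) * P = Q * c * P := by
      calc Q * (Q * c * P) * P = (Q * Q) * c * (P * P) := by
            simp only [Matrix.mul_assoc]
        _ = Q * c * P := by rw [hQQ, hPP]
    obtain ⟨u, p, huC, hpC, hpne, huu, hpH, hpp, hPp, hpP, hup, hQu, huP⟩ :=
      spectral_piece C hCstar hPH hPP hQQ hTC hcne hQTP
    -- the matching projection under Q
    set q' := u * uᴴ with hq'
    have huH_u : uᴴ * u = p := huu
    have hq'C : q' ∈ C := C.mul_mem huC (hCstar u huC)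
    have hq'H : q'ᴴ = q' := by
      rw [hq', Matrix.conjTranspose_mul, Matrix.conjTranspose_conjTranspose]
    have hq'q' : q' * q' = q' := by
      rw [hq']
      calc u * uᴴ * (u * uᴴ) = u * (uᴴ * u) * uᴴ := by simp only [Matrix.mul_assoc]
        _ = u * p * uᴴ := by rw [huu]
        _ = u * uᴴ := by rw [hup]
    have hQq' : Q * q' = q' := by rw [hq', ← Matrix.mul_assoc, hQu]
    have hq'Q : q' * Q = q' := by
      have h := congrArg Matrix.conjTranspose hQq'
      rwa [Matrix.conjTranspose_mul, hq'H, hQH] at h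
    -- trace condition for the pieces
    have htrpq : ∀ b ∈ B, (p * b).trace = (q' * b).trace := by
      intro b hb
      have hub : b * u = u * b := (Subalgebra.mem_centralizer_iff ℂ).mp huC b hb
      calc (p * b).trace = (uᴴ * u * b).trace := by rw [huu]
        _ = (uᴴ * (u * b)).trace := by rw [Matrix.mul_assoc]
        _ = (uᴴ * (b * u)).trace := by rw [hub]
        _ = ((uᴴ * b) * u).trace := by rw [Matrix.mul_assoc]
        _ = (u * (uᴴ * b)).trace := by rw [Matrix.trace_mul_comm]
        _ = (q' * b).trace := by rw [hq', Matrix.mul_assoc]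
    -- the remainders
    set P₂ := P - p with hP₂
    set Q₂ := Q - q' with hQ₂
    have hP₂C : P₂ ∈ C := C.sub_mem hPC hpC
    have hQ₂C : Q₂ ∈ C := C.sub_mem hQC hq'C
    have hP₂H : P₂ᴴ = P₂ := by rw [hP₂, Matrix.conjTranspose_sub, hPH, hpH]
    have hQ₂H : Q₂ᴴ = Q₂ := by rw [hQ₂, Matrix.conjTranspose_sub, hQH, hq'H]
    have hP₂P₂ : P₂ * P₂ = P₂ := by
      rw [hP₂, Matrix.sub_mul, Matrix.mul_sub, Matrix.mul_sub, hPP, hPp, hpP, hpp]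
      abel
    have hQ₂Q₂ : Q₂ * Q₂ = Q₂ := by
      rw [hQ₂, Matrix.sub_mul, Matrix.mul_sub, Matrix.mul_sub, hQQ, hQq', hq'Q, hq'q']
      abel
    have htr₂ : ∀ b ∈ B, (P₂ * b).trace = (Q₂ * b).trace := by
      intro b hb
      rw [hP₂, hQ₂, Matrix.sub_mul, Matrix.sub_mul, Matrix.trace_sub, Matrix.trace_sub,
        htr b hb, htrpq b hb]
    -- rank decrease
    have hpP₂ : p * P₂ = 0 := by rw [hP₂, Matrix.mul_sub, hpP, hpp, sub_self]
    have hP₂p : P₂ * p = 0 := by rw [hP₂, Matrix.sub_mul, hPp, hpp, sub_self]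
    have hsum : p + P₂ = P := by rw [hP₂]; abel
    have hrksum : rk p + rk P₂ = n := by
      rw [← hrk, ← hsum, rk_add hpp hP₂P₂ hpP₂ hP₂p]
    have hrkp : rk p ≠ 0 := fun h => hpne (rk_eq_zero_iff.mp h)
    have hlt : rk P₂ < n := by omega
    obtain ⟨W₂, hW₂C, hW₂l, hW₂r⟩ := IH (rk P₂) hlt P₂ Q₂ rfl hP₂C hQ₂C hP₂H hP₂P₂ hQ₂H hQ₂Q₂ htr₂
    -- absorption identities for W₂
    have hW₂QW : Q₂ * W₂ = W₂ := absorb_left hQ₂H hQ₂Q₂ hW₂r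
    have hW₂PW : W₂ * P₂ = W₂ := absorb_right hP₂H hP₂P₂ hW₂l
    -- assemble
    refine ⟨u + W₂, C.add_mem huC hW₂C, ?_, ?_⟩
    · -- (u + W₂)ᴴ (u + W₂) = P
      have hcross1 : uᴴ * W₂ = 0 := by
        have huQ : uᴴ * Q = uᴴ := by
          have h := congrArg Matrix.conjTranspose hQu
          rwa [Matrix.conjTranspose_mul, hQH] at h
        have huq' : uᴴ * q' = uᴴ := by
          rw [hq', ← Matrix.mul_assoc, huu]
          have : p * uᴴ = (u * p)ᴴ := by
            rw [Matrix.conjTranspose_mul, hpH]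
          rw [this, hup]
        have huQ₂ : uᴴ * Q₂ = 0 := by rw [hQ₂, Matrix.mul_sub, huQ, huq', sub_self]
        rw [← hW₂QW, ← Matrix.mul_assoc, huQ₂, Matrix.zero_mul]
      have hcross2 : W₂ᴴ * u = 0 := by
        have := congrArg Matrix.conjTranspose hcross1
        rwa [Matrix.conjTranspose_mul, Matrix.conjTranspose_conjTranspose,
          Matrix.conjTranspose_zero] at this
      rw [Matrix.conjTranspose_add, Matrix.add_mul, Matrix.mul_add, Matrix.mul_add,
        huu, hW₂l, hcross1, hcross2]
      rw [← hsum]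
      abel
    · -- (u + W₂) (u + W₂)ᴴ = Q
      have hcross1 : u * W₂ᴴ = 0 := by
        have huP₂ : u * P₂ = 0 := by rw [hP₂, Matrix.mul_sub, huP, hup, sub_self]
        have hW₂H : W₂ᴴ = P₂ * W₂ᴴ := by
          have := congrArg Matrix.conjTranspose hW₂PW
          rw [Matrix.conjTranspose_mul, hP₂H] at this
          exact this.symm
        rw [hW₂H, ← Matrix.mul_assoc, huP₂, Matrix.zero_mul]
      have hcross2 : W₂ * uᴴ = 0 := by
        have := congrArg Matrix.conjTranspose hcross1
        rwa [Matrix.conjTranspose_mul, Matrix.conjTranspose_conjTranspose,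
          Matrix.conjTranspose_zero] at this
      rw [Matrix.conjTranspose_add, Matrix.add_mul, Matrix.mul_add, Matrix.mul_add,
        ← hq', hW₂r, hcross1, hcross2]
      have hsumQ : q' + Q₂ = Q := by rw [hQ₂]; abel
      rw [← hsumQ]
      abel

/-- From the projection equivalence, extract a unitary intertwiner when `P + Q = 1`. -/
theorem unitary_exchange (B : Subalgebra ℂ (Matrix κ κ ℂ)) (hB : ∀ b ∈ B, bᴴ ∈ B)
    (P Q : Matrix κ κ ℂ)
    (hPC : P ∈ Subalgebra.centralizer ℂ (B : Set (Matrix κ κ ℂ)))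
    (hQC : Q ∈ Subalgebra.centralizer ℂ (B : Set (Matrix κ κ ℂ)))
    (hPH : Pᴴ = P) (hPP : P * P = P) (hQH : Qᴴ = Q) (hQQ : Q * Q = Q)
    (hPQ : P + Q = 1)
    (htr : ∀ b ∈ B, (P * b).trace = (Q * b).trace) :
    ∃ U ∈ Matrix.unitaryGroup κ ℂ,
      (∀ b ∈ B, b * U = U * b) ∧ U * P = Q * U := by
  obtain ⟨W, hWC, hWl, hWr⟩ :=
    proj_equiv B hB (rk P) P Q rfl hPC hQC hPH hPP hQH hQQ htr
  have hPQ0 : P * Q = 0 := by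
    have h : P * P + P * Q = P := by rw [← Matrix.mul_add, hPQ, Matrix.mul_one]
    rw [hPP] at h
    have h2 : P + P * Q = P + 0 := by rw [add_zero]; exact h
    exact add_left_cancel h2
  have hQP0 : Q * P = 0 := by
    have h : Q * P + P * P = P := by rw [← Matrix.add_mul, add_comm, hPQ, Matrix.one_mul]
    rw [hPP] at h
    have h2 : P + Q * P = P + 0 := by rw [add_zero, add_comm]; exact h
    exact add_left_cancel h2
  -- absorption for W
  have hWP : W * P = W := absorb_right hPH hPP hWl
  have hQW : Q * W = W := absorb_left hQH hQQ hWr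
  have hWW : W * W = 0 := by
    rw [← hWP, ← hQW]
    calc Q * W * P * (Q * W * P) = Q * W * ((P * Q) * (W * P)) := by
          simp only [Matrix.mul_assoc]
      _ = 0 := by rw [hPQ0, Matrix.zero_mul, Matrix.mul_zero]
  set U := W + Wᴴ with hU
  have hUU : Uᴴ * U = 1 := by
    rw [hU, Matrix.conjTranspose_add, Matrix.conjTranspose_conjTranspose]
    rw [Matrix.add_mul, Matrix.mul_add, Matrix.mul_add]
    have hWHWH : Wᴴ * Wᴴ = 0 := by
      have := congrArg Matrix.conjTranspose hWW
      rwa [Matrix.conjTranspose_mul, Matrix.conjTranspose_zero] at this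
    rw [hWl, hWr, hWW, hWHWH]
    rw [← hPQ]
    abel
  have hUmem : U ∈ Matrix.unitaryGroup κ ℂ := by
    rw [Matrix.mem_unitaryGroup_iff']
    rw [Matrix.star_eq_conjTranspose]
    exact hUU
  refine ⟨U, hUmem, ?_, ?_⟩
  · intro b hb
    have h1 : b * W = W * b := (Subalgebra.mem_centralizer_iff ℂ).mp hWC b hb
    have h2 : b * Wᴴ = Wᴴ * b :=
      (Subalgebra.mem_centralizer_iff ℂ).mp (centralizer_star_closed B hB W hWC) b hb
    rw [hU, Matrix.mul_add, Matrix.add_mul, h1, h2]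
  · have hWHP : Wᴴ * P = 0 := by
      have hPW : P * W = 0 := by
        rw [← hQW, ← Matrix.mul_assoc, hPQ0, Matrix.zero_mul]
      have := congrArg Matrix.conjTranspose hPW
      rwa [Matrix.conjTranspose_mul, hPH, Matrix.conjTranspose_zero] at this
    have hQWH : Q * Wᴴ = 0 := by
      have hWQ : W * Q = 0 := by
        rw [← hWP, Matrix.mul_assoc, hPQ0, Matrix.mul_zero]
      have := congrArg Matrix.conjTranspose hWQ
      rwa [Matrix.conjTranspose_mul, hQH, Matrix.conjTranspose_zero] at this
    rw [hU, Matrix.add_mul, Matrix.mul_add, hWP, hWHP, hQW, hQWH]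



/-! ### block helpers -/

lemma trace_fromBlocks {d : ℕ} (A : Matrix (Fin d) (Fin d) ℂ) (B C D : Matrix (Fin d) (Fin d) ℂ) :
    (Matrix.fromBlocks A B C D).trace = A.trace + D.trace := by
  simp [Matrix.trace, Matrix.diag, Fintype.sum_sum_type, Matrix.fromBlocks]

lemma prod_fromBlocks {d m : ℕ} (H H' : Fin m → Matrix (Fin d) (Fin d) ℂ) (L : List (Fin m)) :
    (L.map (fun j => Matrix.fromBlocks (H j) 0 0 (H' j))).prod =
      Matrix.fromBlocks (L.map H).prod 0 0 (L.map H').prod := by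
  induction L with
  | nil => simp [Matrix.fromBlocks_one]
  | cons j L ih =>
      simp only [List.map_cons, List.prod_cons, ih, Matrix.fromBlocks_multiply]
      simp

lemma list_of_range {α β : Type*} (K : α → β) :
    ∀ l : List β, (∀ y ∈ l, y ∈ Set.range K) → ∃ L : List α, l = L.map K := by
  intro l
  induction l with
  | nil => exact fun _ => ⟨[], rfl⟩
  | cons a l ih =>
      intro h
      obtain ⟨j, rfl⟩ := h a (List.mem_cons_self)
      obtain ⟨L, hL⟩ := ih (fun y hy => h y (List.mem_cons_of_mem _ hy))
      exact ⟨j :: L, by rw [List.map_cons, ← hL]⟩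

/-! ### extending trace equality to all word lengths -/

lemma all_word_traces {d m : ℕ} (H H' : Fin m → Matrix (Fin d) (Fin d) ℂ)
    (htr : ∀ L : List (Fin m), L ≠ [] → L.length ≤ 2 * d ^ 2 →
      ((L.map H).prod).trace = ((L.map H').prod).trace) :
    ∀ L : List (Fin m), ((L.map H).prod).trace = ((L.map H').prod).trace := by
  classical
  let pw : List (Fin m) → Matrix (Fin d) (Fin d) ℂ × Matrix (Fin d) (Fin d) ℂ :=
    fun L => ((L.map H).prod, (L.map H').prod)
  let S : ℕ → Submodule ℂ (Matrix (Fin d) (Fin d) ℂ × Matrix (Fin d) (Fin d) ℂ) :=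
    fun k => Submodule.span ℂ (pw '' {L | L ≠ [] ∧ L.length ≤ k})
  have hmono : Monotone S := fun a b hab =>
    Submodule.span_mono (Set.image_mono (fun L hL => ⟨hL.1, hL.2.trans hab⟩))
  -- once two consecutive spans agree, the chain is constant
  have hstep : ∀ k, S k = S (k + 1) → S (k + 1) = S (k + 2) := by
    intro k hk
    refine le_antisymm (hmono (by omega)) ?_
    rw [Submodule.span_le]
    rintro y ⟨L, ⟨hne, hlen⟩, rfl⟩
    by_cases hle : L.length ≤ k + 1
    · exact Submodule.subset_span ⟨L, ⟨hne, hle⟩, rfl⟩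
    · cases L with
      | nil => exact absurd rfl hne
      | cons j L₂ =>
        have hlenc : L₂.length + 1 ≤ k + 2 := by simpa using hlen
        have hL₂ne : L₂ ≠ [] := by
          intro h
          rw [h] at hle
          simp at hle
        have hlen₂ : L₂.length ≤ k + 1 := by omega
        have hmem₂ : pw L₂ ∈ S (k + 1) := Submodule.subset_span ⟨L₂, ⟨hL₂ne, hlen₂⟩, rfl⟩
        rw [← hk] at hmem₂
        set μj : (Matrix (Fin d) (Fin d) ℂ × Matrix (Fin d) (Fin d) ℂ) →ₗ[ℂ]
            (Matrix (Fin d) (Fin d) ℂ × Matrix (Fin d) (Fin d) ℂ) :=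
          (LinearMap.mulLeft ℂ (H j)).prodMap (LinearMap.mulLeft ℂ (H' j)) with hμj
        have hform : pw (j :: L₂) = μj (pw L₂) := rfl
        rw [hform]
        have hmapped : ∀ y ∈ S k, μj y ∈ S (k + 1) := by
          intro y hy
          induction hy using Submodule.span_induction with
          | mem z hz =>
              obtain ⟨L₃, ⟨h3ne, h3len⟩, rfl⟩ := hz
              have hf : μj (pw L₃) = pw (j :: L₃) := rfl
              rw [hf]
              exact Submodule.subset_span ⟨j :: L₃, ⟨List.cons_ne_nil j L₃, by
                simp only [List.length_cons]; omega⟩, rfl⟩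
          | zero => rw [map_zero]; exact Submodule.zero_mem _
          | add a b ha hb iha ihb => rw [map_add]; exact Submodule.add_mem _ iha ihb
          | smul r a ha iha => rw [_root_.map_smul]; exact Submodule.smul_mem _ r iha
        exact hmapped _ hmem₂
  -- stabilization within the dimension bound
  have hdim : finrank ℂ (Matrix (Fin d) (Fin d) ℂ × Matrix (Fin d) (Fin d) ℂ) = 2 * d ^ 2 := by
    rw [Module.finrank_prod, Module.finrank_matrix]
    simp [Fintype.card_fin]
    ring
  have hex : ∃ k ≤ 2 * d ^ 2, S k = S (k + 1) := by
    by_contra hcon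
    push_neg at hcon
    have hchain : ∀ k, k ≤ 2 * d ^ 2 + 1 → k ≤ finrank ℂ (S k) := by
      intro k
      induction k with
      | zero => intro _; exact Nat.zero_le _
      | succ k ih =>
          intro hk
          have h1 : k ≤ finrank ℂ (S k) := ih (by omega)
          have hne : S k ≠ S (k + 1) := hcon k (by omega)
          have hlt : S k < S (k + 1) := lt_of_le_of_ne (hmono (by omega)) hne
          have := Submodule.finrank_lt_finrank_of_lt hlt
          omega
    have h2 := hchain (2 * d ^ 2 + 1) (le_refl _)
    have h3 : finrank ℂ (S (2 * d ^ 2 + 1)) ≤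
        finrank ℂ (Matrix (Fin d) (Fin d) ℂ × Matrix (Fin d) (Fin d) ℂ) :=
      Submodule.finrank_le _
    omega
  obtain ⟨k0, hk0le, hk0⟩ := hex
  have hconst : ∀ t, S (k0 + t) = S (k0 + t + 1) := by
    intro t
    induction t with
    | zero => exact hk0
    | succ t ih => exact hstep (k0 + t) ih
  have hup : ∀ t, S (k0 + t) = S k0 := by
    intro t
    induction t with
    | zero => rfl
    | succ t ih => rw [← Nat.add_assoc, ← hconst t, ih]
  have hallin : ∀ L : List (Fin m), L ≠ [] → pw L ∈ S (2 * d ^ 2) := by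
    intro L hne
    have h1 : pw L ∈ S L.length := Submodule.subset_span ⟨L, ⟨hne, le_refl _⟩, rfl⟩
    rcases le_total L.length k0 with h | h
    · exact hmono (h.trans hk0le) h1
    · have : S L.length = S k0 := by
        have := hup (L.length - k0)
        rwa [Nat.add_sub_cancel' h] at this
      rw [this] at h1
      exact hmono hk0le h1
  -- the trace functional vanishes on S (2d²)
  set f : (Matrix (Fin d) (Fin d) ℂ × Matrix (Fin d) (Fin d) ℂ) →ₗ[ℂ] ℂ :=
    (Matrix.traceLinearMap (Fin d) ℂ ℂ).comp (LinearMap.fst ℂ _ _)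
      - (Matrix.traceLinearMap (Fin d) ℂ ℂ).comp (LinearMap.snd ℂ _ _) with hf
  have hfval : ∀ L : List (Fin m),
      f (pw L) = ((L.map H).prod).trace - ((L.map H').prod).trace := fun L => rfl
  have hker : S (2 * d ^ 2) ≤ LinearMap.ker f := by
    rw [Submodule.span_le]
    rintro y ⟨L, ⟨hne, hlen⟩, rfl⟩
    rw [SetLike.mem_coe, LinearMap.mem_ker, hfval L, htr L hne hlen, sub_self]
  intro L
  rcases eq_or_ne L [] with rfl | hne
  · rfl
  · have hh := hker (hallin L hne)
    rw [LinearMap.mem_ker, hfval L] at hh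
    exact sub_eq_zero.mp hh


end SpechtAux

theorem word_traces_up_to_bound_imply_simultaneous_unitary_similarity
    (d m c : ℕ) (hd : 1 ≤ d) (hm : 1 ≤ m)
    (hc : IsLeast {c' : ℕ | 0 < c' ∧ (m : ℤ) ≤ ((c' : ℤ) ^ 2 - 3 * c' + 2) / 2} c)
    (H H' : Fin m → Matrix (Fin d) (Fin d) ℂ)
    (hH : ∀ j, (H j).IsHermitian) (hH' : ∀ j, (H' j).IsHermitian)
    (htr : ∀ (ℓ : ℕ), 1 ≤ ℓ → (ℓ : ℤ) ≤ ⌈(((c * d : ℕ) : ℚ) ^ 2 + 2) / 3⌉ →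
      ∀ w : Fin ℓ → Fin m, wordTrace H w = wordTrace H' w) :
    SimUnitarilySimilar H H' := by
  classical
  obtain ⟨⟨hcpos, hcm⟩, -⟩ := hc
  have hc3 : 3 ≤ c := by
    by_contra hlt
    push_neg at hlt
    have hm1 : (1 : ℤ) ≤ (m : ℤ) := by exact_mod_cast hm
    interval_cases c
    · norm_num at hcm
      omega
    · norm_num at hcm
      omega
  -- trace equality for all short lists
  have htrL : ∀ L : List (Fin m), L ≠ [] → L.length ≤ 2 * d ^ 2 →
      ((L.map H).prod).trace = ((L.map H').prod).trace := by
    intro L hne hlen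
    have h1 : 1 ≤ L.length := by
      cases L with
      | nil => exact absurd rfl hne
      | cons a l => simp
    have hbound : (L.length : ℤ) ≤ ⌈(((c * d : ℕ) : ℚ) ^ 2 + 2) / 3⌉ := by
      have hq : ((2 * d ^ 2 : ℕ) : ℚ) ≤ (((c * d : ℕ) : ℚ) ^ 2 + 2) / 3 := by
        rw [le_div_iff₀ (by norm_num : (0 : ℚ) < 3)]
        have hd1 : (1 : ℚ) ≤ (d : ℚ) := by exact_mod_cast hd
        have hc3' : (3 : ℚ) ≤ (c : ℚ) := by exact_mod_cast hc3
        push_cast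
        nlinarith [sq_nonneg ((d : ℚ)), sq_nonneg ((c : ℚ) * d - 3 * d)]
      have h2 : (((2 * d ^ 2 : ℕ) : ℤ) : ℚ) ≤
          ((⌈(((c * d : ℕ) : ℚ) ^ 2 + 2) / 3⌉ : ℤ) : ℚ) := by
        push_cast at hq ⊢
        exact le_trans hq (Int.le_ceil _)
      have h3 : ((2 * d ^ 2 : ℕ) : ℤ) ≤ ⌈(((c * d : ℕ) : ℚ) ^ 2 + 2) / 3⌉ := by
        exact_mod_cast h2
      have h4 : (L.length : ℤ) ≤ ((2 * d ^ 2 : ℕ) : ℤ) := by exact_mod_cast hlen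
      exact h4.trans h3
    have hw := htr L.length h1 hbound L.get
    have hofn : ∀ (G : Fin m → Matrix (Fin d) (Fin d) ℂ),
        (List.ofFn fun i => G (L.get i)) = L.map G := by
      intro G
      rw [show (fun i => G (L.get i)) = G ∘ L.get from rfl, ← List.map_ofFn, List.ofFn_get]
    rwa [wordTrace, wordTrace, hofn H, hofn H'] at hw
  have hall : ∀ L : List (Fin m), ((L.map H).prod).trace = ((L.map H').prod).trace :=
    SpechtAux.all_word_traces H H' htrL
  -- the block algebra
  set K : Fin m → Matrix (Fin d ⊕ Fin d) (Fin d ⊕ Fin d) ℂ :=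
    fun j => Matrix.fromBlocks (H j) 0 0 (H' j) with hK
  set B : Subalgebra ℂ (Matrix (Fin d ⊕ Fin d) (Fin d ⊕ Fin d) ℂ) :=
    Algebra.adjoin ℂ (Set.range K) with hB
  have hKH : ∀ j, (K j)ᴴ = K j := by
    intro j
    rw [hK]
    simp only [Matrix.fromBlocks_conjTranspose, Matrix.conjTranspose_zero]
    rw [(hH j).eq, (hH' j).eq]
  have hBstar : ∀ b ∈ B, bᴴ ∈ B := by
    intro b hb
    rw [hB] at hb ⊢
    induction hb using Algebra.adjoin_induction with
    | mem x hx =>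
        obtain ⟨j, rfl⟩ := hx
        rw [hKH j]
        exact Algebra.subset_adjoin ⟨j, rfl⟩
    | algebraMap r =>
        rw [Algebra.algebraMap_eq_smul_one, Matrix.conjTranspose_smul, Matrix.conjTranspose_one]
        exact Subalgebra.smul_mem _ (Subalgebra.one_mem _) _
    | add x y hx hy ihx ihy =>
        rw [Matrix.conjTranspose_add]
        exact Subalgebra.add_mem _ ihx ihy
    | mul x y hx hy ihx ihy =>
        rw [Matrix.conjTranspose_mul]
        exact Subalgebra.mul_mem _ ihy ihx
  set P : Matrix (Fin d ⊕ Fin d) (Fin d ⊕ Fin d) ℂ :=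
    Matrix.fromBlocks 1 0 0 0 with hP
  set Q : Matrix (Fin d ⊕ Fin d) (Fin d ⊕ Fin d) ℂ :=
    Matrix.fromBlocks 0 0 0 1 with hQ
  have hPK : ∀ j, K j * P = P * K j := by
    intro j
    rw [hK, hP]
    simp [Matrix.fromBlocks_multiply]
  have hQK : ∀ j, K j * Q = Q * K j := by
    intro j
    rw [hK, hQ]
    simp [Matrix.fromBlocks_multiply]
  have hPC : P ∈ Subalgebra.centralizer ℂ (B : Set (Matrix (Fin d ⊕ Fin d) (Fin d ⊕ Fin d) ℂ)) := by
    rw [Subalgebra.mem_centralizer_iff]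
    intro g hg
    rw [hB] at hg
    induction hg using Algebra.adjoin_induction with
    | mem x hx => obtain ⟨j, rfl⟩ := hx; exact hPK j
    | algebraMap r => exact Algebra.commutes r P
    | add x y hx hy ihx ihy => rw [Matrix.add_mul, Matrix.mul_add, ihx, ihy]
    | mul x y hx hy ihx ihy =>
        rw [Matrix.mul_assoc, ihy, ← Matrix.mul_assoc, ihx, Matrix.mul_assoc]
  have hQC : Q ∈ Subalgebra.centralizer ℂ (B : Set (Matrix (Fin d ⊕ Fin d) (Fin d ⊕ Fin d) ℂ)) := by
    rw [Subalgebra.mem_centralizer_iff]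
    intro g hg
    rw [hB] at hg
    induction hg using Algebra.adjoin_induction with
    | mem x hx => obtain ⟨j, rfl⟩ := hx; exact hQK j
    | algebraMap r => exact Algebra.commutes r Q
    | add x y hx hy ihx ihy => rw [Matrix.add_mul, Matrix.mul_add, ihx, ihy]
    | mul x y hx hy ihx ihy =>
        rw [Matrix.mul_assoc, ihy, ← Matrix.mul_assoc, ihx, Matrix.mul_assoc]
  have hPH : Pᴴ = P := by
    rw [hP]
    simp [Matrix.fromBlocks_conjTranspose]
  have hQH : Qᴴ = Q := by
    rw [hQ]
    simp [Matrix.fromBlocks_conjTranspose]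
  have hPP : P * P = P := by
    rw [hP, Matrix.fromBlocks_multiply]
    simp
  have hQQ : Q * Q = Q := by
    rw [hQ, Matrix.fromBlocks_multiply]
    simp
  have hPQ1 : P + Q = 1 := by
    rw [hP, hQ, Matrix.fromBlocks_add, ← Matrix.fromBlocks_one]
    simp
  have htrPQ : ∀ b ∈ B, (P * b).trace = (Q * b).trace := by
    intro b hb
    have hb2 : b ∈ Subalgebra.toSubmodule (Algebra.adjoin ℂ (Set.range K)) := by
      rw [Subalgebra.mem_toSubmodule, ← hB]
      exact hb
    clear hb
    rw [Algebra.adjoin_eq_span] at hb2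
    induction hb2 using Submodule.span_induction with
    | mem x hx =>
        obtain ⟨l, hl, rfl⟩ := Submonoid.exists_list_of_mem_closure hx
        obtain ⟨L, rfl⟩ := SpechtAux.list_of_range K l hl
        have hprod : (L.map K).prod =
            Matrix.fromBlocks (L.map H).prod 0 0 (L.map H').prod :=
          SpechtAux.prod_fromBlocks H H' L
        rw [hprod]
        have hPX : P * Matrix.fromBlocks (L.map H).prod 0 0 (L.map H').prod
            = Matrix.fromBlocks (L.map H).prod 0 0 0 := by
          rw [hP, Matrix.fromBlocks_multiply]
          simp
        have hQX : Q * Matrix.fromBlocks (L.map H).prod 0 0 (L.map H').prod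
            = Matrix.fromBlocks 0 0 0 (L.map H').prod := by
          rw [hQ, Matrix.fromBlocks_multiply]
          simp
        rw [hPX, hQX, SpechtAux.trace_fromBlocks, SpechtAux.trace_fromBlocks]
        rw [Matrix.trace_zero, add_zero, zero_add]
        exact hall L
    | zero => simp
    | add x y hx hy ihx ihy =>
        rw [Matrix.mul_add, Matrix.mul_add, Matrix.trace_add, Matrix.trace_add, ihx, ihy]
    | smul r x hx ihx =>
        rw [Matrix.mul_smul, Matrix.mul_smul, Matrix.trace_smul, Matrix.trace_smul, ihx]
  obtain ⟨U, hUmem, hUcomm, hUP⟩ :=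
    SpechtAux.unitary_exchange B hBstar P Q hPC hQC hPH hPP hQH hQQ hPQ1 htrPQ
  have hU1 : star U * U = 1 := Matrix.mem_unitaryGroup_iff'.mp hUmem
  have hU2 : U * star U = 1 := Matrix.mem_unitaryGroup_iff.mp hUmem
  set A1 := U.toBlocks₁₁ with hA1
  set B2 := U.toBlocks₁₂ with hB2
  set C2 := U.toBlocks₂₁ with hC2
  set D2 := U.toBlocks₂₂ with hD2
  have hUform : U = Matrix.fromBlocks A1 B2 C2 D2 := (Matrix.fromBlocks_toBlocks U).symm
  have hUP' := hUP
  rw [hUform, hP, hQ, Matrix.fromBlocks_multiply, Matrix.fromBlocks_multiply] at hUP'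
  simp only [Matrix.mul_one, Matrix.one_mul, Matrix.mul_zero, Matrix.zero_mul,
    add_zero, zero_add] at hUP'
  have hA0 : A1 = 0 := by
    have h := congrArg Matrix.toBlocks₁₁ hUP'
    simpa [Matrix.toBlocks_fromBlocks₁₁] using h
  have hD0 : D2 = 0 := by
    have h := congrArg Matrix.toBlocks₂₂ hUP'
    simp only [Matrix.toBlocks_fromBlocks₂₂] at h
    exact h.symm
  have hcommj : ∀ j, K j * U = U * K j := fun j =>
    hUcomm (K j) (by rw [hB]; exact Algebra.subset_adjoin ⟨j, rfl⟩)
  have hinter : ∀ j, H' j * C2 = C2 * H j := by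
    intro j
    have h := hcommj j
    rw [hUform, hK, Matrix.fromBlocks_multiply, Matrix.fromBlocks_multiply] at h
    have h2 := congrArg Matrix.toBlocks₂₁ h
    simpa [Matrix.toBlocks_fromBlocks₂₁] using h2
  have hCU2 : C2 * C2ᴴ = 1 := by
    have h := hU2
    rw [hUform, Matrix.star_eq_conjTranspose, Matrix.fromBlocks_conjTranspose,
      Matrix.fromBlocks_multiply, ← Matrix.fromBlocks_one] at h
    have h2 := congrArg Matrix.toBlocks₂₂ h
    simp only [Matrix.toBlocks_fromBlocks₂₂] at h2
    rw [hD0] at h2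
    simpa using h2
  refine ⟨C2, ?_, ?_⟩
  · rw [Matrix.mem_unitaryGroup_iff, Matrix.star_eq_conjTranspose]
    exact hCU2
  · intro j
    calc H' j = H' j * (C2 * C2ᴴ) := by rw [hCU2, Matrix.mul_one]
      _ = (H' j * C2) * C2ᴴ := by rw [Matrix.mul_assoc]
      _ = (C2 * H j) * C2ᴴ := by rw [hinter j]
      _ = C2 * H j * C2ᴴ := rfl
end

section
/- Let H₁,…,H_m be Hermitian d×d complex matrices that are simultaneously stoquasticizable. Then for every pair of indices i, j, the characteristic polynomial p of the Hermitian matrix i·(H_i H_j − H_j H_i) satisfies p(−X) = (−1)^d · p(X); in particular, for every eigenvalue λ ≠ 0 of i·(H_i H_j − H_j H_i), −λ is also an eigenvalue, with the same multiplicity. -/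
open Matrix Polynomial

/-- A matrix is stoquastic if it is Hermitian and all off-diagonal entries are
real and nonpositive. -/
def IsStoquastic {d : ℕ} (H : Matrix (Fin d) (Fin d) ℂ) : Prop :=
  H.IsHermitian ∧ ∀ j k : Fin d, j ≠ k → (H j k).im = 0 ∧ (H j k).re ≤ 0

/-- A tuple of Hermitian matrices is simultaneously stoquasticizable if a single
unitary conjugates all of them into stoquastic form. -/
def SimStoquasticizable {d m : ℕ} (H : Fin m → Matrix (Fin d) (Fin d) ℂ) : Prop :=
  ∃ U ∈ Matrix.unitaryGroup (Fin d) ℂ, ∀ j, IsStoquastic (U * H j * Uᴴ)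

/-- The substitution X ↦ -X as a ring hom on ℂ[X]. -/
noncomputable def negXHom : Polynomial ℂ →+* Polynomial ℂ :=
  Polynomial.eval₂RingHom Polynomial.C (-Polynomial.X)

lemma negXHom_apply (p : Polynomial ℂ) : negXHom p = p.comp (-X) := rfl

/-- charpoly is invariant under unitary conjugation. -/
lemma charpoly_conj_unitary {d : ℕ} (U M : Matrix (Fin d) (Fin d) ℂ)
    (hU : U ∈ Matrix.unitaryGroup (Fin d) ℂ) :
    (U * M * Uᴴ).charpoly = M.charpoly := by
  have hU1 : U * Uᴴ = 1 := by
    have h : U * star U = 1 := Unitary.mul_star_self_of_mem hU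
    rwa [Matrix.star_eq_conjTranspose] at h
  set f : Matrix (Fin d) (Fin d) ℂ →+* Matrix (Fin d) (Fin d) (Polynomial ℂ) :=
    (Polynomial.C : ℂ →+* Polynomial ℂ).mapMatrix with hf
  have hcm : Matrix.charmatrix (U * M * Uᴴ) = f U * Matrix.charmatrix M * f Uᴴ := by
    have hcomm : f U * Matrix.scalar (Fin d) (X : Polynomial ℂ) =
        Matrix.scalar (Fin d) (X : Polynomial ℂ) * f U :=
      ((Matrix.scalar_commute (X : Polynomial ℂ) (fun r => Commute.all _ _) (f U)).eq).symm
    have hfUU : f U * f Uᴴ = 1 := by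
      rw [← _root_.map_mul, hU1, _root_.map_one]
    calc Matrix.charmatrix (U * M * Uᴴ)
        = Matrix.scalar (Fin d) (X : Polynomial ℂ) - f (U * M * Uᴴ) := rfl
      _ = f U * Matrix.charmatrix M * f Uᴴ := by
          unfold Matrix.charmatrix
          rw [mul_sub, sub_mul]
          congr 1
          · rw [hcomm, mul_assoc, hfUU, mul_one]
          · rw [_root_.map_mul, _root_.map_mul]
  have hdet : (f U).det * (f Uᴴ).det = 1 := by
    rw [← Matrix.det_mul, ← _root_.map_mul, hU1, _root_.map_one, Matrix.det_one]
  rw [Matrix.charpoly, hcm, Matrix.det_mul, Matrix.det_mul, Matrix.charpoly]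
  ring_nf
  rw [mul_comm, ← mul_assoc, mul_comm (f Uᴴ).det, hdet, one_mul]

lemma charmatrix_transpose' {d : ℕ} (M : Matrix (Fin d) (Fin d) ℂ) :
    Matrix.charmatrix Mᵀ = (Matrix.charmatrix M)ᵀ := by
  ext k l
  by_cases h : k = l
  · subst h; simp
  · simp [Matrix.charmatrix_apply_ne _ _ _ h, Matrix.charmatrix_apply_ne _ _ _ (Ne.symm h),
      Matrix.transpose_apply]

lemma charpoly_transpose' {d : ℕ} (M : Matrix (Fin d) (Fin d) ℂ) :
    Mᵀ.charpoly = M.charpoly := by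
  rw [Matrix.charpoly, charmatrix_transpose', Matrix.det_transpose, Matrix.charpoly]

lemma skew_aux {d : ℕ} (A B : Matrix (Fin d) (Fin d) ℂ) (hA : Aᵀ = A) (hB : Bᵀ = B) :
    (Complex.I • (A * B - B * A))ᵀ = -(Complex.I • (A * B - B * A)) := by
  rw [Matrix.transpose_smul, Matrix.transpose_sub, Matrix.transpose_mul, Matrix.transpose_mul,
    hA, hB, ← smul_neg]
  congr 1
  abel

/-- If Mᵀ = -M then the charpoly of M satisfies p(-X) = (-1)^d p(X). -/
lemma charpoly_comp_neg_of_skew {d : ℕ} (M : Matrix (Fin d) (Fin d) ℂ)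
    (h : Mᵀ = -M) :
    M.charpoly.comp (-X) = (-1 : Polynomial ℂ) ^ d * M.charpoly := by
  have hmap : (Matrix.charmatrix M).map negXHom = -(Matrix.charmatrix (-M)) := by
    ext k l
    by_cases hkl : k = l
    · subst hkl
      simp only [Matrix.map_apply, Matrix.charmatrix_apply_eq, Matrix.neg_apply,
        Matrix.neg_apply, map_sub, negXHom]
      simp [Polynomial.eval₂_X, Polynomial.eval₂_C]
      ring
    · simp only [Matrix.map_apply, Matrix.charmatrix_apply_ne _ _ _ hkl, Matrix.neg_apply,
        Matrix.charmatrix_apply_ne _ _ _ hkl, map_neg, negXHom]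
      simp [Polynomial.eval₂_C]
  have h1 : M.charpoly.comp (-X) = ((Matrix.charmatrix M).map negXHom).det := by
    rw [Matrix.charpoly, ← negXHom_apply, RingHom.map_det, RingHom.mapMatrix_apply]
  rw [h1, hmap, Matrix.det_neg, Fintype.card_fin]
  have : (Matrix.charmatrix (-M)).det = (-M).charpoly := rfl
  rw [this, ← h, charpoly_transpose']

lemma rootMultiplicity_comp_negX_le (q : Polynomial ℂ) (hq : q ≠ 0) (mu : ℂ) :
    q.rootMultiplicity (-mu) ≤ (q.comp (-X)).rootMultiplicity mu := by
  have hcc : (q.comp (-X)).comp (-X) = q := by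
    rw [Polynomial.comp_assoc]
    simp
  have hq0 : q.comp (-X) ≠ 0 := by
    intro h0
    apply hq
    rw [← hcc, h0, Polynomial.zero_comp]
  set n := q.rootMultiplicity (-mu) with hn
  have hdvd : (X - Polynomial.C (-mu)) ^ n ∣ q := Polynomial.pow_rootMultiplicity_dvd q (-mu)
  have hdvd2 : ((X - Polynomial.C (-mu)) ^ n).comp (-X) ∣ q.comp (-X) := by
    obtain ⟨c, hc⟩ := hdvd
    exact ⟨c.comp (-X), by rw [hc, Polynomial.mul_comp]⟩
  have hcompeq : ((X - Polynomial.C (-mu)) ^ n).comp (-X) =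
      (-1 : Polynomial ℂ) ^ n * (X - Polynomial.C mu) ^ n := by
    rw [Polynomial.pow_comp, Polynomial.sub_comp, Polynomial.X_comp, Polynomial.C_comp,
      ← mul_pow, map_neg]
    ring_nf
  have hdvd3 : (X - Polynomial.C mu) ^ n ∣ q.comp (-X) := by
    rw [hcompeq] at hdvd2
    have hu : IsUnit ((-1 : Polynomial ℂ) ^ n) := (isUnit_one.neg).pow n
    exact (dvd_mul_left _ _).trans hdvd2
  exact (Polynomial.le_rootMultiplicity_iff hq0).mpr hdvd3

lemma rootMultiplicity_comp_negX (p : Polynomial ℂ) (hp : p ≠ 0) (lam : ℂ) :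
    (p.comp (-X)).rootMultiplicity lam = p.rootMultiplicity (-lam) := by
  have hcc : (p.comp (-X)).comp (-X) = p := by
    rw [Polynomial.comp_assoc]; simp
  have hq0 : p.comp (-X) ≠ 0 := by
    intro h0; apply hp; rw [← hcc, h0, Polynomial.zero_comp]
  refine le_antisymm ?_ (rootMultiplicity_comp_negX_le p hp lam)
  have := rootMultiplicity_comp_negX_le (p.comp (-X)) hq0 (-lam)
  rwa [neg_neg, hcc] at this

theorem simStoquasticizable_implies_paired_commutator_spectrum
    (d m : ℕ) (H : Fin m → Matrix (Fin d) (Fin d) ℂ)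
    (hH : ∀ j, (H j).IsHermitian)
    (hstoq : SimStoquasticizable H) (i j : Fin m) :
    (Matrix.charpoly (Complex.I • (H i * H j - H j * H i))).comp (-X) =
        (-1 : Polynomial ℂ) ^ d * Matrix.charpoly (Complex.I • (H i * H j - H j * H i)) ∧
      ∀ lam : ℂ, lam ≠ 0 →
        (Matrix.charpoly (Complex.I • (H i * H j - H j * H i))).rootMultiplicity lam =
          (Matrix.charpoly (Complex.I • (H i * H j - H j * H i))).rootMultiplicity (-lam) := by
  obtain ⟨U, hU, hs⟩ := hstoq
  have hUs : Uᴴ * U = 1 := Matrix.UnitaryGroup.star_mul_self ⟨U, hU⟩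
  -- conjugated matrices are real symmetric
  have hsymm : ∀ k : Fin m, (U * H k * Uᴴ)ᵀ = U * H k * Uᴴ := by
    intro k
    obtain ⟨hherm, hreal⟩ := hs k
    ext a b
    by_cases hab : a = b
    · subst hab; rfl
    · have h1 : (U * H k * Uᴴ) b a = star ((U * H k * Uᴴ) a b) := by
        conv_lhs => rw [← hherm]
        rw [Matrix.conjTranspose_apply]
      have h2 : ((U * H k * Uᴴ) a b).im = 0 := (hreal a b hab).1
      rw [Matrix.transpose_apply, h1]
      exact Complex.conj_eq_iff_im.mpr h2
  set A := U * H i * Uᴴ with hA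
  set B := U * H j * Uᴴ with hB
  set M := Complex.I • (A * B - B * A) with hM
  have hMskew : Mᵀ = -M := skew_aux A B (hsymm i) (hsymm j)
  have hconj : M = U * (Complex.I • (H i * H j - H j * H i)) * Uᴴ := by
    rw [hM, hA, hB]
    have hAB : (U * H i * Uᴴ) * (U * H j * Uᴴ) = U * (H i * H j) * Uᴴ := by
      calc (U * H i * Uᴴ) * (U * H j * Uᴴ) = U * H i * (Uᴴ * U) * H j * Uᴴ := by
            noncomm_ring
        _ = U * (H i * H j) * Uᴴ := by rw [hUs]; noncomm_ring
    have hBA : (U * H j * Uᴴ) * (U * H i * Uᴴ) = U * (H j * H i) * Uᴴ := by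
      calc (U * H j * Uᴴ) * (U * H i * Uᴴ) = U * H j * (Uᴴ * U) * H i * Uᴴ := by
            noncomm_ring
        _ = U * (H j * H i) * Uᴴ := by rw [hUs]; noncomm_ring
    rw [hAB, hBA, Matrix.mul_smul, Matrix.smul_mul, Matrix.mul_sub, Matrix.sub_mul]
  have hcp : (Complex.I • (H i * H j - H j * H i)).charpoly = M.charpoly := by
    rw [hconj, charpoly_conj_unitary _ _ hU]
  have hmain : (Complex.I • (H i * H j - H j * H i)).charpoly.comp (-X) =
      (-1 : Polynomial ℂ) ^ d * (Complex.I • (H i * H j - H j * H i)).charpoly := by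
    rw [hcp]
    exact charpoly_comp_neg_of_skew M hMskew
  refine ⟨hmain, ?_⟩
  intro lam _
  set p := (Complex.I • (H i * H j - H j * H i)).charpoly with hp
  have hpne : p ≠ 0 := (Matrix.charpoly_monic _).ne_zero
  have h1 : (p.comp (-X)).rootMultiplicity lam = p.rootMultiplicity (-lam) :=
    rootMultiplicity_comp_negX p hpne lam
  have h2 : ((-1 : Polynomial ℂ) ^ d * p).rootMultiplicity lam = p.rootMultiplicity lam := by
    have hne : (-1 : Polynomial ℂ) ^ d * p ≠ 0 := by
      intro h0
      apply hpne
      have hu : IsUnit ((-1 : Polynomial ℂ) ^ d) := (isUnit_one.neg).pow d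
      obtain ⟨u, hu'⟩ := hu
      calc p = ↑u⁻¹ * (↑u * p) := by rw [← mul_assoc]; simp
        _ = 0 := by rw [hu', h0, mul_zero]
    rw [Polynomial.rootMultiplicity_mul hne]
    have hC : ((-1 : Polynomial ℂ) ^ d) = Polynomial.C ((-1 : ℂ) ^ d) := by
      rw [← Polynomial.C_1, ← Polynomial.C_neg, ← Polynomial.C_pow]
    rw [hC, Polynomial.rootMultiplicity_C, zero_add]
  rw [← h2, ← hmain, h1]
end

section
/- Let d ≥ 3 and m ≥ 2. With respect to an additive Haar (Lebesgue) measure on the m-fold product of the real vector space of Hermitian d×d complex matrices, the set of tuples (H₁,…,H_m) that are simultaneously stoquasticizable has measure zero. -/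
open Matrix MeasureTheory

namespace SimStoqAux

open MvPolynomial

/-! ### Zero sets of nonzero multivariate polynomials are Lebesgue-null -/

lemma mvpoly_zero_set_null : ∀ (n : ℕ) (p : MvPolynomial (Fin n) ℝ), p ≠ 0 →
    volume {x : Fin n → ℝ | eval x p = 0} = 0 := by
  intro n
  induction n with
  | zero =>
    intro p hp
    obtain ⟨c, rfl⟩ := MvPolynomial.C_surjective (Fin 0) p
    have hc : c ≠ 0 := fun h => hp (by simp [h])
    convert measure_empty
    · ext x; simp [hc]
    · infer_instance
  | succ n ih =>
    intro p hp
    set q := finSuccEquiv ℝ n p with hq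
    have hq0 : q ≠ 0 := fun h => hp ((map_eq_zero_iff _ (AlgEquiv.injective _)).mp h)
    have hlc : q.leadingCoeff ≠ 0 := fun h => hq0 (Polynomial.leadingCoeff_eq_zero.mp h)
    set e := MeasurableEquiv.piFinSuccAbove (fun _ : Fin (n+1) => ℝ) 0 with he
    have hmp : MeasurePreserving e volume (volume.prod volume) :=
      volume_preserving_piFinSuccAbove (fun _ : Fin (n+1) => ℝ) 0
    have hesymm : ∀ (y : ℝ) (s : Fin n → ℝ), e.symm (y, s) = Fin.cons y s := by
      intro y s; simp [he, MeasurableEquiv.piFinSuccAbove, Fin.insertNthEquiv]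
    set T : Set (ℝ × (Fin n → ℝ)) := {ys | eval (Fin.cons ys.1 ys.2) p = 0} with hT
    have hTmeas : MeasurableSet T := by
      have hc : Continuous fun ys : ℝ × (Fin n → ℝ) => (Fin.cons ys.1 ys.2 : Fin (n+1) → ℝ) := by
        refine continuous_pi fun i => ?_
        refine Fin.cases ?_ ?_ i
        · simpa using continuous_fst
        · intro j; simp only [Fin.cons_succ]; fun_prop
      exact ((MvPolynomial.continuous_eval (p := p)).comp hc).measurable
        (measurableSet_singleton 0)
    have key : (volume.prod (volume : Measure (Fin n → ℝ))) T = 0 := by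
      have hswap : MeasurePreserving (Prod.swap : (Fin n → ℝ) × ℝ → ℝ × (Fin n → ℝ))
          ((volume : Measure (Fin n → ℝ)).prod volume) (volume.prod volume) :=
        Measure.measurePreserving_swap
      rw [← hswap.measure_preimage hTmeas.nullMeasurableSet]
      have hTswapmeas : MeasurableSet (Prod.swap ⁻¹' T) :=
        hTmeas.preimage measurable_swap
      rw [Measure.measure_prod_null hTswapmeas]
      have hae : ∀ᵐ s : Fin n → ℝ, eval s q.leadingCoeff ≠ 0 := by
        have := ih q.leadingCoeff hlc
        filter_upwards [measure_eq_zero_iff_ae_notMem.mp this] with s hs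
        simpa using hs
      filter_upwards [hae] with s hs
      have hmapne : Polynomial.map (eval s) q ≠ 0 := by
        intro h
        apply hs
        have h2 := congrArg (fun r => Polynomial.coeff r q.natDegree) h
        simp only [Polynomial.coeff_map, Polynomial.coeff_zero] at h2
        exact h2
      have hfin : {y : ℝ | (Polynomial.map (eval s) q).eval y = 0}.Finite :=
        Polynomial.finite_setOf_isRoot hmapne
      have hsub : (Prod.mk s ⁻¹' (Prod.swap ⁻¹' T)) ⊆
          {y : ℝ | (Polynomial.map (eval s) q).eval y = 0} := by
        intro y hy
        simp only [Set.mem_preimage, Set.mem_setOf_eq, hT, Prod.swap] at hy ⊢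
        rwa [← eval_eq_eval_mv_eval']
      have hz : volume {y : ℝ | (Polynomial.map (eval s) q).eval y = 0} = 0 :=
        hfin.measure_zero volume
      simp only [Pi.zero_apply]
      exact measure_mono_null hsub hz
    have hset : {x : Fin (n+1) → ℝ | eval x p = 0} = e ⁻¹' T := by
      ext x
      simp only [Set.mem_preimage, Set.mem_setOf_eq, hT]
      have hx : Fin.cons (e x).1 (e x).2 = x := by
        rw [← hesymm (e x).1 (e x).2]; simp [e.symm_apply_apply x]
      rw [hx]
    rw [hset, hmp.measure_preimage hTmeas.nullMeasurableSet]
    exact key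

/-! ### Polynomial functions -/

def IsPolyFun {n : ℕ} (f : (Fin n → ℝ) → ℝ) : Prop :=
  ∃ p : MvPolynomial (Fin n) ℝ, ∀ x, f x = eval x p

variable {n : ℕ}

lemma IsPolyFun.const (c : ℝ) : IsPolyFun (fun _ : Fin n → ℝ => c) :=
  ⟨C c, fun x => by simp⟩

lemma IsPolyFun.add {f g : (Fin n → ℝ) → ℝ} (hf : IsPolyFun f) (hg : IsPolyFun g) :
    IsPolyFun (fun x => f x + g x) := by
  obtain ⟨p, hp⟩ := hf; obtain ⟨q, hq⟩ := hg
  exact ⟨p + q, fun x => by simp [hp, hq]⟩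

lemma IsPolyFun.mul {f g : (Fin n → ℝ) → ℝ} (hf : IsPolyFun f) (hg : IsPolyFun g) :
    IsPolyFun (fun x => f x * g x) := by
  obtain ⟨p, hp⟩ := hf; obtain ⟨q, hq⟩ := hg
  exact ⟨p * q, fun x => by simp [hp, hq]⟩

lemma IsPolyFun.neg {f : (Fin n → ℝ) → ℝ} (hf : IsPolyFun f) :
    IsPolyFun (fun x => -f x) := by
  obtain ⟨p, hp⟩ := hf
  exact ⟨-p, fun x => by simp [hp]⟩

lemma IsPolyFun.sub {f g : (Fin n → ℝ) → ℝ} (hf : IsPolyFun f) (hg : IsPolyFun g) :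
    IsPolyFun (fun x => f x - g x) := by
  simpa [sub_eq_add_neg] using hf.add hg.neg

lemma IsPolyFun.sum {ι : Type*} (s : Finset ι) (f : ι → (Fin n → ℝ) → ℝ)
    (h : ∀ i ∈ s, IsPolyFun (f i)) : IsPolyFun (fun x => ∑ i ∈ s, f i x) := by
  classical
  induction s using Finset.induction_on with
  | empty => simpa using IsPolyFun.const 0
  | insert a s hnotmem ih =>
    simp only [Finset.sum_insert hnotmem]
    exact (h a (Finset.mem_insert_self a s)).add
      (ih fun i hi => h i (Finset.mem_insert_of_mem hi))

lemma IsPolyFun.linear (l : (Fin n → ℝ) →ₗ[ℝ] ℝ) : IsPolyFun (fun x => l x) := by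
  refine ⟨∑ i, C (l (Pi.single i 1)) * X i, fun x => ?_⟩
  have hx : x = ∑ i, x i • (Pi.single i (1:ℝ) : Fin n → ℝ) := by
    funext j
    simp [Finset.sum_apply, Pi.single_apply, Finset.sum_ite_eq']
  conv_lhs => rw [hx]
  rw [map_sum]
  simp [_root_.map_smul, mul_comm]

def IsPolyFunC {n : ℕ} (g : (Fin n → ℝ) → ℂ) : Prop :=
  IsPolyFun (fun x => (g x).re) ∧ IsPolyFun (fun x => (g x).im)

lemma IsPolyFunC.add {f g : (Fin n → ℝ) → ℂ} (hf : IsPolyFunC f) (hg : IsPolyFunC g) :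
    IsPolyFunC (fun x => f x + g x) :=
  ⟨by simpa using hf.1.add hg.1, by simpa using hf.2.add hg.2⟩

lemma IsPolyFunC.mul {f g : (Fin n → ℝ) → ℂ} (hf : IsPolyFunC f) (hg : IsPolyFunC g) :
    IsPolyFunC (fun x => f x * g x) := by
  constructor
  · simpa [Complex.mul_re] using (hf.1.mul hg.1).sub (hf.2.mul hg.2)
  · simpa [Complex.mul_im] using (hf.1.mul hg.2).add (hf.2.mul hg.1)

lemma IsPolyFunC.sum {ι : Type*} (s : Finset ι) (f : ι → (Fin n → ℝ) → ℂ)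
    (h : ∀ i ∈ s, IsPolyFunC (f i)) : IsPolyFunC (fun x => ∑ i ∈ s, f i x) := by
  constructor
  · simpa [Complex.re_sum] using IsPolyFun.sum s (fun i x => (f i x).re) fun i hi => (h i hi).1
  · simpa [Complex.im_sum] using IsPolyFun.sum s (fun i x => (f i x).im) fun i hi => (h i hi).2

lemma IsPolyFunC.linear (l : (Fin n → ℝ) →ₗ[ℝ] ℂ) : IsPolyFunC (fun x => l x) :=
  ⟨IsPolyFun.linear (Complex.reLm.comp l), IsPolyFun.linear (Complex.imLm.comp l)⟩

lemma matpoly_mul {d : ℕ} {M N : (Fin n → ℝ) → Matrix (Fin d) (Fin d) ℂ}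
    (hM : ∀ i j, IsPolyFunC fun x => M x i j) (hN : ∀ i j, IsPolyFunC fun x => N x i j) :
    ∀ i j, IsPolyFunC fun x => (M x * N x) i j := by
  intro i j
  have h : (fun x => (M x * N x) i j) = fun x => ∑ k, M x i k * N x k j := by
    funext x; exact Matrix.mul_apply
  rw [h]
  exact IsPolyFunC.sum _ _ fun k _ => (hM i k).mul (hN k j)

lemma matpoly_trace_im {d : ℕ} {M : (Fin n → ℝ) → Matrix (Fin d) (Fin d) ℂ}
    (hM : ∀ i j, IsPolyFunC fun x => M x i j) :
    IsPolyFun fun x => (Matrix.trace (M x)).im := by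
  have h : (fun x => (Matrix.trace (M x)).im) = fun x => (∑ i, M x i i).im := by
    funext x; rfl
  rw [h]
  exact (IsPolyFunC.sum Finset.univ (fun i x => M x i i) fun i _ => hM i i).2

/-! ### The witness matrices -/

noncomputable def A3 : Matrix (Fin 3) (Fin 3) ℂ := !![1,0,0;0,2,0;0,0,3]
noncomputable def B3 : Matrix (Fin 3) (Fin 3) ℂ := !![0,1,Complex.I;1,0,1;-Complex.I,1,0]

lemma A3_sa : A3ᴴ = A3 := by
  ext i j
  fin_cases i <;> fin_cases j <;>
    simp [A3, Matrix.conjTranspose_apply, Matrix.vecHead, Matrix.vecTail]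

lemma B3_sa : B3ᴴ = B3 := by
  ext i j
  fin_cases i <;> fin_cases j <;>
    simp [B3, Matrix.conjTranspose_apply, Matrix.vecHead, Matrix.vecTail]

lemma key3 : (Matrix.trace (A3 * A3 * B3 * B3 * A3 * B3)).im = -2 := by
  simp [Matrix.trace_fin_three, Matrix.mul_apply, Fin.sum_univ_three, A3, B3,
    Matrix.vecHead, Matrix.vecTail]
  norm_num [Complex.ext_iff]

section Ext
variable {d : ℕ}

def embEquiv (hd : 3 ≤ d) : Fin 3 ⊕ Fin (d-3) ≃ Fin d :=
  finSumFinEquiv.trans (finCongr (by omega))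

noncomputable def MExt (hd : 3 ≤ d) (M : Matrix (Fin 3) (Fin 3) ℂ) : Matrix (Fin d) (Fin d) ℂ :=
  (Matrix.fromBlocks M 0 0 0).submatrix (embEquiv hd).symm (embEquiv hd).symm

lemma MExt_mul (hd : 3 ≤ d) (M N : Matrix (Fin 3) (Fin 3) ℂ) :
    MExt hd M * MExt hd N = MExt hd (M * N) := by
  unfold MExt
  rw [Matrix.submatrix_mul_equiv]
  simp [Matrix.fromBlocks_multiply]

lemma MExt_trace (hd : 3 ≤ d) (M : Matrix (Fin 3) (Fin 3) ℂ) :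
    Matrix.trace (MExt hd M) = Matrix.trace M := by
  unfold MExt Matrix.trace
  simp only [Matrix.diag, Matrix.submatrix_apply]
  rw [← Equiv.sum_comp (embEquiv hd) (fun i => (Matrix.fromBlocks M 0 0 0)
    ((embEquiv hd).symm i) ((embEquiv hd).symm i))]
  simp [Fintype.sum_sum_type, Matrix.fromBlocks_apply₁₁, Matrix.fromBlocks_apply₂₂]

lemma MExt_sa (hd : 3 ≤ d) (M : Matrix (Fin 3) (Fin 3) ℂ) (h : Mᴴ = M) :
    (MExt hd M)ᴴ = MExt hd M := by
  unfold MExt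
  rw [Matrix.conjTranspose_submatrix, Matrix.fromBlocks_conjTranspose]
  simp [h]
end Ext

/-! ### Real-entried matrices -/

def RealEnt {d : ℕ} (M : Matrix (Fin d) (Fin d) ℂ) : Prop := ∀ i j, (M i j).im = 0

lemma RealEnt.mul {d : ℕ} {M N : Matrix (Fin d) (Fin d) ℂ}
    (hM : RealEnt M) (hN : RealEnt N) : RealEnt (M * N) := by
  intro i j
  rw [Matrix.mul_apply, Complex.im_sum]
  refine Finset.sum_eq_zero fun k _ => ?_
  simp [Complex.mul_im, hM i k, hN k j]

lemma RealEnt.trace_im {d : ℕ} {M : Matrix (Fin d) (Fin d) ℂ}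
    (hM : RealEnt M) : (Matrix.trace M).im = 0 := by
  rw [Matrix.trace, Complex.im_sum]
  exact Finset.sum_eq_zero fun i _ => hM i i

lemma stoq_realEnt {d : ℕ} {M : Matrix (Fin d) (Fin d) ℂ}
    (h : IsStoquastic M) : RealEnt M := by
  intro i j
  by_cases hij : i = j
  · subst hij
    have := congrFun (congrFun h.1 i) i
    rw [Matrix.conjTranspose_apply] at this
    have him := congrArg Complex.im this
    simp at him
    linarith
  · exact (h.2 i j hij).1

/-! ### Instances -/

instance instMatSC (d : ℕ) : SecondCountableTopology (Matrix (Fin d) (Fin d) ℂ) :=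
  inferInstanceAs (SecondCountableTopology (Fin d → Fin d → ℂ))

instance instWSC (d : ℕ) : SecondCountableTopology (selfAdjoint (Matrix (Fin d) (Fin d) ℂ)) :=
  TopologicalSpace.secondCountableTopology_induced _ _ Subtype.val

instance instWSMul (d : ℕ) : ContinuousSMul ℝ (selfAdjoint (Matrix (Fin d) (Fin d) ℂ)) := by
  constructor
  apply continuous_induced_rng.2
  exact continuous_fst.smul (continuous_subtype_val.comp continuous_snd)

noncomputable def coeLM (d : ℕ) :
    selfAdjoint (Matrix (Fin d) (Fin d) ℂ) →ₗ[ℝ] Matrix (Fin d) (Fin d) ℂ :=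
  { toFun := fun x => (x : Matrix (Fin d) (Fin d) ℂ),
    map_add' := fun _ _ => rfl,
    map_smul' := fun _ _ => rfl }

instance instWFD (d : ℕ) : FiniteDimensional ℝ (selfAdjoint (Matrix (Fin d) (Fin d) ℂ)) :=
  FiniteDimensional.of_injective (coeLM d) Subtype.val_injective

noncomputable def entryLM (d : ℕ) (i j : Fin d) : Matrix (Fin d) (Fin d) ℂ →ₗ[ℝ] ℂ :=
  { toFun := fun M => M i j,
    map_add' := fun _ _ => rfl,
    map_smul' := fun _ _ => rfl }

end SimStoqAux

open SimStoqAux MvPolynomial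

theorem simStoquasticizable_measure_zero
    (d m : ℕ) (hd : 3 ≤ d) (hm : 2 ≤ m)
    [MeasurableSpace (selfAdjoint (Matrix (Fin d) (Fin d) ℂ))]
    [BorelSpace (selfAdjoint (Matrix (Fin d) (Fin d) ℂ))]
    (μ : Measure (Fin m → selfAdjoint (Matrix (Fin d) (Fin d) ℂ)))
    [μ.IsAddHaarMeasure] :
    μ {H : Fin m → selfAdjoint (Matrix (Fin d) (Fin d) ℂ) |
        SimStoquasticizable (fun j => (H j : Matrix (Fin d) (Fin d) ℂ))} = 0 := by
  classical
  set V := Fin m → selfAdjoint (Matrix (Fin d) (Fin d) ℂ) with hV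
  set i0 : Fin m := ⟨0, by omega⟩ with hi0
  set i1 : Fin m := ⟨1, by omega⟩ with hi1
  have hi01 : i0 ≠ i1 := by simp [hi0, hi1, Fin.ext_iff]
  -- the invariant function
  set F : V → ℝ := fun H =>
    (Matrix.trace ((H i0 : Matrix (Fin d) (Fin d) ℂ) * (H i0 : Matrix (Fin d) (Fin d) ℂ) *
      (H i1 : Matrix (Fin d) (Fin d) ℂ) * (H i1 : Matrix (Fin d) (Fin d) ℂ) *
      (H i0 : Matrix (Fin d) (Fin d) ℂ) * (H i1 : Matrix (Fin d) (Fin d) ℂ))).im with hF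
  -- Step 1: inclusion
  have hincl : {H : V | SimStoquasticizable (fun j => (H j : Matrix (Fin d) (Fin d) ℂ))} ⊆
      {H : V | F H = 0} := by
    rintro H ⟨U, hU, hst⟩
    set A : Matrix (Fin d) (Fin d) ℂ := (H i0 : Matrix (Fin d) (Fin d) ℂ) with hA
    set B : Matrix (Fin d) (Fin d) ℂ := (H i1 : Matrix (Fin d) (Fin d) ℂ) with hB
    have hU1 : Uᴴ * U = 1 := by
      have := (Unitary.mem_iff.mp hU).1
      rwa [Matrix.star_eq_conjTranspose] at this
    have hcan : ∀ X : Matrix (Fin d) (Fin d) ℂ, Uᴴ * (U * X) = X := by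
      intro X; rw [← mul_assoc, hU1, one_mul]
    have hword : (U * A * Uᴴ) * (U * A * Uᴴ) * (U * B * Uᴴ) * (U * B * Uᴴ) *
        (U * A * Uᴴ) * (U * B * Uᴴ) = U * (A * A * B * B * A * B) * Uᴴ := by
      simp only [mul_assoc, hcan]
    have htr : Matrix.trace (U * (A * A * B * B * A * B) * Uᴴ) =
        Matrix.trace (A * A * B * B * A * B) := by
      rw [Matrix.trace_mul_cycle, ← mul_assoc, hU1, one_mul]
    have hreal : RealEnt ((U * A * Uᴴ) * (U * A * Uᴴ) * (U * B * Uᴴ) * (U * B * Uᴴ) *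
        (U * A * Uᴴ) * (U * B * Uᴴ)) := by
      have hrA : RealEnt (U * A * Uᴴ) := stoq_realEnt (hst i0)
      have hrB : RealEnt (U * B * Uᴴ) := stoq_realEnt (hst i1)
      exact ((((hrA.mul hrA).mul hrB).mul hrB).mul hrA).mul hrB
    have : (Matrix.trace (A * A * B * B * A * B)).im = 0 := by
      rw [← htr, ← hword]
      exact hreal.trace_im
    simpa [hF, Set.mem_setOf_eq, hA, hB] using this
  -- Step 2: the witness
  have hAd : (MExt hd A3)ᴴ = MExt hd A3 := MExt_sa hd A3 A3_sa
  have hBd : (MExt hd B3)ᴴ = MExt hd B3 := MExt_sa hd B3 B3_sa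
  set Aw : selfAdjoint (Matrix (Fin d) (Fin d) ℂ) := ⟨MExt hd A3, by
    rw [selfAdjoint.mem_iff, Matrix.star_eq_conjTranspose]; exact hAd⟩ with hAw
  set Bw : selfAdjoint (Matrix (Fin d) (Fin d) ℂ) := ⟨MExt hd B3, by
    rw [selfAdjoint.mem_iff, Matrix.star_eq_conjTranspose]; exact hBd⟩ with hBw
  set H₀ : V := fun j => if j = i0 then Aw else if j = i1 then Bw else 0 with hH₀
  have hH00 : (H₀ i0 : Matrix (Fin d) (Fin d) ℂ) = MExt hd A3 := by simp [hH₀, hAw]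
  have hH01 : (H₀ i1 : Matrix (Fin d) (Fin d) ℂ) = MExt hd B3 := by
    simp [hH₀, hBw, hi01.symm, Ne.symm hi01]
  have hFH₀ : F H₀ = -2 := by
    rw [hF]
    simp only [hH00, hH01]
    rw [MExt_mul, MExt_mul, MExt_mul, MExt_mul, MExt_mul, MExt_trace]
    exact key3
  have hFH₀ne : F H₀ ≠ 0 := by rw [hFH₀]; norm_num
  -- Step 3: F is polynomial in coordinates
  set nV : ℕ := Module.finrank ℝ V with hnV
  set b := Module.finBasis ℝ V with hb
  set e : V ≃ₗ[ℝ] (Fin nV → ℝ) := b.equivFun with he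
  have hentry : ∀ (i : Fin m) (j k : Fin d),
      IsPolyFunC fun x : Fin nV → ℝ => ((e.symm x) i : Matrix (Fin d) (Fin d) ℂ) j k := by
    intro i j k
    exact IsPolyFunC.linear (((entryLM d j k).comp
      ((coeLM d).comp (LinearMap.proj i))).comp (e.symm : (Fin nV → ℝ) →ₗ[ℝ] V))
  have hpoly : IsPolyFun fun x : Fin nV → ℝ => F (e.symm x) := by
    simp only [hF]
    exact matpoly_trace_im (matpoly_mul (matpoly_mul (matpoly_mul (matpoly_mul
      (matpoly_mul (hentry i0) (hentry i0)) (hentry i1)) (hentry i1)) (hentry i0)) (hentry i1))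
  obtain ⟨p, hp⟩ := hpoly
  have hpne : p ≠ 0 := by
    intro h
    apply hFH₀ne
    have h1 : F H₀ = eval (e H₀) p := by simpa using hp (e H₀)
    rw [h1, h]
    simp
  -- Step 4: transfer measure zero
  set Z : Set (Fin nV → ℝ) := {x | eval x p = 0} with hZ
  have hZnull : volume Z = 0 := mvpoly_zero_set_null nV p hpne
  have hZmeas : MeasurableSet Z :=
    (MvPolynomial.continuous_eval (p := p)).measurable (measurableSet_singleton 0)
  have hFset : {H : V | F H = 0} = ⇑e ⁻¹' Z := by
    ext H
    have h1 : F H = eval (e H) p := by simpa using hp (e H)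
    simp only [Set.mem_setOf_eq, Set.mem_preimage, hZ, h1]
  haveI : (μ.map ⇑e).IsAddHaarMeasure :=
    MeasureTheory.Measure.MapLinearEquiv.isAddHaarMeasure μ e
  have hν : (μ.map ⇑e) Z = 0 := by
    rw [MeasureTheory.Measure.isAddLeftInvariant_eq_smul (μ.map ⇑e) volume]
    simp [hZnull]
  have hecont : Continuous ⇑e :=
    LinearMap.continuous_of_finiteDimensional (e : V →ₗ[ℝ] (Fin nV → ℝ))
  have hmap : μ (⇑e ⁻¹' Z) = (μ.map ⇑e) Z :=
    (MeasureTheory.Measure.map_apply hecont.measurable hZmeas).symm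
  refine measure_mono_null hincl ?_
  rw [hFset, hmap]
  exact hν
end

section
/- For any two Hermitian 2×2 complex matrices H₁ and H₂, there exists a unitary 2×2 matrix U such that U H₁ U† and U H₂ U† are both stoquastic; that is, every pair of Hermitian 2×2 matrices is simultaneously stoquasticizable. -/
open Matrix

theorem two_by_two_pairs_simStoquasticizable
    (H₁ H₂ : Matrix (Fin 2) (Fin 2) ℂ)
    (h₁ : H₁.IsHermitian) (h₂ : H₂.IsHermitian) :
    ∃ U ∈ Matrix.unitaryGroup (Fin 2) ℂ,
      IsStoquastic (U * H₁ * Uᴴ) ∧ IsStoquastic (U * H₂ * Uᴴ) := by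
  classical
  set W : Matrix (Fin 2) (Fin 2) ℂ := (h₁.eigenvectorUnitary : Matrix (Fin 2) (Fin 2) ℂ) with hW
  have hWmem : W ∈ Matrix.unitaryGroup (Fin 2) ℂ := (h₁.eigenvectorUnitary).2
  set M : Matrix (Fin 2) (Fin 2) ℂ := star W * H₂ * W with hM
  have hMH : M.IsHermitian := by
    rw [hM, Matrix.star_eq_conjTranspose]
    exact Matrix.isHermitian_conjTranspose_mul_mul W h₂
  set b : ℂ := M 0 1 with hb
  set c : ℂ := if b = 0 then 1 else -(b / (‖b‖ : ℂ)) with hc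
  have hmc : b * star b = (‖b‖ : ℂ) ^ 2 := by
    rw [show star b = (starRingEnd ℂ) b from rfl, Complex.mul_conj, Complex.normSq_eq_norm_sq]
    push_cast
    ring
  have hbsc : b * star c = -(‖b‖ : ℂ) := by
    rw [hc]
    split_ifs with h
    · simp [h]
    · have habs : (‖b‖ : ℂ) ≠ 0 := by
        simpa using (norm_ne_zero_iff.mpr h)
      rw [show star (-(b / (‖b‖ : ℂ))) = -(star b / (‖b‖ : ℂ)) by
        simp [star_div₀]]
      field_simp
      linear_combination (-1 : ℂ) * hmc
  have hcc : c * star c = 1 := by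
    rw [hc]
    split_ifs with h
    · simp
    · have habs : (‖b‖ : ℂ) ≠ 0 := by
        simpa using (norm_ne_zero_iff.mpr h)
      rw [show star (-(b / (‖b‖ : ℂ))) = -(star b / (‖b‖ : ℂ)) by
        simp [star_div₀]]
      field_simp
      linear_combination hmc
  have habs2 : c * star b = -(‖b‖ : ℂ) := by
    have h' : star (b * star c) = -(‖b‖ : ℂ) := by
      rw [hbsc]; simp
    rw [star_mul', star_star] at h'
    rw [mul_comm]; exact h'
  have hPstar : star (Matrix.diagonal ![(1:ℂ), c])
      = Matrix.diagonal (fun i => star (![(1:ℂ), c] i)) := by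
    rw [Matrix.star_eq_conjTranspose, Matrix.diagonal_conjTranspose]
    rfl
  have hPconj : (Matrix.diagonal ![(1:ℂ), c])ᴴ
      = Matrix.diagonal (fun i => star (![(1:ℂ), c] i)) := by
    rw [← Matrix.star_eq_conjTranspose]; exact hPstar
  have hPmem : Matrix.diagonal ![(1:ℂ), c] ∈ Matrix.unitaryGroup (Fin 2) ℂ := by
    rw [Matrix.mem_unitaryGroup_iff, hPstar, Matrix.diagonal_mul_diagonal]
    have hfun : (fun i => ![(1:ℂ), c] i * star (![(1:ℂ), c] i)) = fun _ => (1:ℂ) := by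
      funext i
      by_cases h0 : i = 0
      · subst h0; simp
      · rw [Fin.eq_one_of_ne_zero i h0]; simpa using hcc
    rw [hfun]
    ext i j
    rcases eq_or_ne i j with rfl | hij
    · simp [Matrix.one_apply_eq]
    · simp [Matrix.diagonal_apply_ne _ hij, Matrix.one_apply_ne hij]
  refine ⟨Matrix.diagonal ![(1:ℂ), c] * star W,
    mul_mem hPmem (Unitary.star_mem hWmem), ?_, ?_⟩
  · refine ⟨Matrix.isHermitian_mul_mul_conjTranspose _ h₁, ?_⟩
    intro j k hjk
    have key : Matrix.diagonal ![(1:ℂ), c] * star W * H₁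
          * (Matrix.diagonal ![(1:ℂ), c] * star W)ᴴ
        = Matrix.diagonal ![(1:ℂ), c]
          * Matrix.diagonal (RCLike.ofReal ∘ h₁.eigenvalues)
          * (Matrix.diagonal ![(1:ℂ), c])ᴴ := by
      rw [← (by simpa using h₁.conjStarAlgAut_star_eigenvectorUnitary : star (h₁.eigenvectorUnitary : Matrix (Fin 2) (Fin 2) ℂ) * H₁ * (h₁.eigenvectorUnitary : Matrix (Fin 2) (Fin 2) ℂ) = diagonal (RCLike.ofReal ∘ h₁.eigenvalues))]
      simp only [Matrix.conjTranspose_mul, Matrix.star_eq_conjTranspose,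
        Matrix.conjTranspose_conjTranspose, ← hW]
      noncomm_ring
    rw [key, hPconj, Matrix.diagonal_mul_diagonal, Matrix.diagonal_mul_diagonal,
      Matrix.diagonal_apply_ne _ hjk]
    simp
  · refine ⟨Matrix.isHermitian_mul_mul_conjTranspose _ h₂, ?_⟩
    intro j k hjk
    have key : Matrix.diagonal ![(1:ℂ), c] * star W * H₂
          * (Matrix.diagonal ![(1:ℂ), c] * star W)ᴴ
        = Matrix.diagonal ![(1:ℂ), c] * M * (Matrix.diagonal ![(1:ℂ), c])ᴴ := by
      rw [hM]
      simp only [Matrix.conjTranspose_mul, Matrix.star_eq_conjTranspose,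
        Matrix.conjTranspose_conjTranspose]
      noncomm_ring
    have hentry : ∀ j k : Fin 2,
        (Matrix.diagonal ![(1:ℂ), c] * M * (Matrix.diagonal ![(1:ℂ), c])ᴴ) j k
        = ![(1:ℂ), c] j * M j k * star (![(1:ℂ), c] k) := by
      intro j k
      rw [hPconj, Matrix.mul_diagonal, Matrix.diagonal_mul]
    have hM10 : M 1 0 = star b := by
      conv_lhs => rw [← hMH]
      rfl
    rw [key, hentry]
    have hj : j = 0 ∨ j = 1 := by
      by_cases h0 : j = 0
      · exact Or.inl h0
      · exact Or.inr (Fin.eq_one_of_ne_zero j h0)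
    have hk : k = 0 ∨ k = 1 := by
      by_cases h0 : k = 0
      · exact Or.inl h0
      · exact Or.inr (Fin.eq_one_of_ne_zero k h0)
    rcases hj with rfl | rfl <;> rcases hk with rfl | rfl
    · exact absurd rfl hjk
    · rw [show ![(1:ℂ), c] 0 = 1 from rfl, show ![(1:ℂ), c] 1 = c from rfl,
        one_mul, ← hb, hbsc]
      constructor
      · simp
      · simp [norm_nonneg b]
    · rw [show ![(1:ℂ), c] 0 = 1 from rfl, show ![(1:ℂ), c] 1 = c from rfl,
        hM10, star_one, mul_one, habs2]
      constructor
      · simp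
      · simp [norm_nonneg b]
    · exact absurd rfl hjk
end
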